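/- arXiv:0912.0620 — 6 statements merged into one kernel-verified Lean document; each statement's English description precedes it below -/
import Mathlib

section
/- For every prime p with p ≡ 1 (mod 4), the Pochhammer value (3/4)_p is congruent to 3·(1/4)_p modulo p^3, i.e., the rational number (3/4)_p − 3·(1/4)_p has p-adic valuation at least 3. -/
open Finset

open Finset

private lemma poch_eval_prod (x : ℚ) (n : ℕ) :
    (ascPochhammer ℚ n).eval x = ∏ i ∈ Finset.range n, (x + i) := by
  induction n with
  | zero => simp
  | succ n ih => rw [ascPochhammer_succ_eval, ih, Finset.prod_range_succ]

/-- Expansion of a product `∏ (a k + t)` when `t^2 = 0`. -/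
private lemma prod_add_of_sq_zero {R : Type*} [CommRing R] (t : R) (ht : t * t = 0)
    (S : Finset ℕ) (a : ℕ → R) :
    ∏ k ∈ S, (a k + t) = ∏ k ∈ S, a k + t * ∑ k ∈ S, ∏ j ∈ S.erase k, a j := by
  classical
  induction S using Finset.induction with
  | empty => simp
  | insert i S hi ih =>
    rw [Finset.prod_insert hi, ih, Finset.prod_insert hi, Finset.sum_insert hi,
      Finset.erase_insert hi]
    have h2 : ∑ k ∈ S, ∏ j ∈ (insert i S).erase k, a j
        = a i * ∑ k ∈ S, ∏ j ∈ S.erase k, a j := by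
      rw [Finset.mul_sum]
      refine Finset.sum_congr rfl fun k hk => ?_
      rw [Finset.erase_insert_of_ne (by rintro rfl; exact hi hk),
        Finset.prod_insert (fun h => hi (Finset.mem_of_mem_erase h))]
    rw [h2]
    linear_combination (∑ k ∈ S, ∏ j ∈ S.erase k, a j) * ht

private lemma sum_univ_zmod_eq_zero (p : ℕ) [NeZero p] (hp : p.Prime) (hodd : p ≠ 2) :
    ∑ x : ZMod p, x = 0 := by
  haveI := Fact.mk hp
  have h1 : ∑ x : ZMod p, -x = ∑ x : ZMod p, x :=
    Fintype.sum_bijective (fun x : ZMod p => -x) neg_involutive.bijective _ _ (fun x => rfl)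
  rw [Finset.sum_neg_distrib] at h1
  have h2 : (2 : ZMod p) * ∑ x : ZMod p, x = 0 := by linear_combination -h1
  rcases mul_eq_zero.mp h2 with h | h
  · exfalso
    have h' : ((2:ℕ) : ZMod p) = 0 := by exact_mod_cast h
    exact hodd ((Nat.prime_dvd_prime_iff_eq hp Nat.prime_two).mp
      ((ZMod.natCast_eq_zero_iff 2 p).mp h'))
  · exact h

private lemma sum_inv_zmod_eq_zero (p : ℕ) [NeZero p] (hp : p.Prime) (hodd : p ≠ 2) :
    ∑ x : ZMod p, x⁻¹ = 0 := by
  haveI := Fact.mk hp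
  have h : ∑ x : ZMod p, x⁻¹ = ∑ x : ZMod p, x :=
    Fintype.sum_bijective (fun x : ZMod p => x⁻¹) inv_involutive.bijective _ _ (fun x => rfl)
  rw [h]; exact sum_univ_zmod_eq_zero p hp hodd


private lemma harmonic_dvd (p m : ℕ) (hp : p.Prime) (hm : p = 4*m+1) (hm1 : 1 ≤ m) :
    (p:ℤ) ∣ ∑ k ∈ (Finset.range p).erase (3*m),
        ∏ j ∈ ((Finset.range p).erase (3*m)).erase k, (4*(j:ℤ)+3) := by
  haveI := Fact.mk hp
  haveI : NeZero p := ⟨hp.ne_zero⟩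
  have hodd : p ≠ 2 := by omega
  set S := (Finset.range p).erase (3*m) with hS
  rw [← ZMod.intCast_zmod_eq_zero_iff_dvd]
  push_cast
  have hbne : ∀ k ∈ S, (4*(k : ZMod p)+3) ≠ 0 := by
    intro k hk h
    have hkS : k < p ∧ k ≠ 3*m := by
      rw [hS, Finset.mem_erase, Finset.mem_range] at hk; tauto
    have h' : ((4*k+3 : ℕ) : ZMod p) = 0 := by push_cast; linear_combination h
    obtain ⟨c, hc⟩ := (ZMod.natCast_eq_zero_iff _ p).mp h'
    rcases Nat.lt_or_ge c 4 with h4 | h4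
    · interval_cases c <;> omega
    · have : p * 4 ≤ p * c := Nat.mul_le_mul_left _ h4
      omega
  have hrw : ∀ k ∈ S, (∏ j ∈ S.erase k, (4*(j : ZMod p)+3))
      = (4*(k : ZMod p)+3)⁻¹ * ∏ j ∈ S, (4*(j : ZMod p)+3) := by
    intro k hk
    rw [← Finset.mul_prod_erase S _ hk, ← mul_assoc, inv_mul_cancel₀ (hbne k hk), one_mul]
  rw [Finset.sum_congr rfl hrw, ← Finset.sum_mul]
  have hinj : ∀ x ∈ S, ∀ y ∈ S, (4*(x : ZMod p)+3) = (4*(y : ZMod p)+3) → x = y := by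
    intro x hx y hy h
    have hx' : x < p := by rw [hS, Finset.mem_erase, Finset.mem_range] at hx; tauto
    have hy' : y < p := by rw [hS, Finset.mem_erase, Finset.mem_range] at hy; tauto
    have h' : ((4*x+3 : ℕ) : ZMod p) = ((4*y+3 : ℕ) : ZMod p) := by
      push_cast; linear_combination h
    have hmod := (ZMod.natCast_eq_natCast_iff _ _ _).mp h'
    have hdvd : (p:ℤ) ∣ ((4*y+3 : ℕ) : ℤ) - ((4*x+3 : ℕ) : ℤ) := (Nat.modEq_iff_dvd).mp hmod
    have hdvd2 : (p:ℤ) ∣ 4 * ((y:ℤ) - (x:ℤ)) := by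
      convert hdvd using 1; push_cast; ring
    have hp' : Prime (p:ℤ) := Nat.prime_iff_prime_int.mp hp
    rcases hp'.dvd_mul.mp hdvd2 with h4 | hxy
    · exfalso
      have h4' : p ∣ 4 := by exact_mod_cast h4
      have h2' : p ∣ 2 := hp.dvd_of_dvd_pow (n := 2) (by simpa using h4')
      exact hodd ((Nat.prime_dvd_prime_iff_eq hp Nat.prime_two).mp h2')
    · have : (y:ℤ) - (x:ℤ) = 0 := Int.eq_zero_of_abs_lt_dvd hxy (by rw [abs_lt]; omega)
      omega
  have himage : S.image (fun k : ℕ => 4*(k : ZMod p)+3) = Finset.univ.erase (0 : ZMod p) := by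
    apply Finset.eq_of_subset_of_card_le
    · intro x hx
      rw [Finset.mem_image] at hx
      obtain ⟨k, hk, rfl⟩ := hx
      exact Finset.mem_erase.mpr ⟨hbne k hk, Finset.mem_univ _⟩
    · rw [Finset.card_erase_of_mem (Finset.mem_univ _), Finset.card_univ, ZMod.card,
        Finset.card_image_of_injOn hinj, hS, Finset.card_erase_of_mem
          (by rw [Finset.mem_range]; omega), Finset.card_range]
  have hsum : (∑ k ∈ S, (4*(k : ZMod p)+3)⁻¹) = 0 := by
    have e1 : (∑ k ∈ S, (4*(k : ZMod p)+3)⁻¹)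
        = ∑ x ∈ S.image (fun k : ℕ => 4*(k : ZMod p)+3), x⁻¹ :=
      (Finset.sum_image (g := fun k : ℕ => 4*(k : ZMod p)+3) (f := fun x : ZMod p => x⁻¹) hinj).symm
    rw [e1, himage, Finset.sum_erase _ (by simp)]
    exact sum_inv_zmod_eq_zero p hp hodd
  rw [hsum, zero_mul]



private lemma key_dvd (p : ℕ) (hp : p.Prime) (h4 : p % 4 = 1) :
    ((p:ℤ))^3 ∣ (∏ k ∈ Finset.range p, (4*(k:ℤ)+3)) - 3 * ∏ k ∈ Finset.range p, (4*(k:ℤ)+1) := by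
  have h2 := hp.two_le
  obtain ⟨m, hm⟩ : ∃ m, p = 4*m+1 := ⟨p/4, by omega⟩
  have hm1 : 1 ≤ m := by omega
  set S := (Finset.range p).erase (3*m) with hS
  -- split off the multiple-of-p factors
  have hA : ∏ k ∈ Finset.range p, (4*(k:ℤ)+3)
      = 3*(p:ℤ) * ∏ k ∈ S, (4*(k:ℤ)+3) := by
    rw [← Finset.mul_prod_erase _ _ (show 3*m ∈ Finset.range p by rw [Finset.mem_range]; omega)]
    congr 1
    push_cast
    rw [hm]; push_cast; ring
  have hB : ∏ k ∈ Finset.range p, (4*(k:ℤ)+1)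
      = (p:ℤ) * ∏ k ∈ (Finset.range p).erase m, (4*(k:ℤ)+1) := by
    rw [← Finset.mul_prod_erase _ _ (show m ∈ Finset.range p by rw [Finset.mem_range]; omega)]
    congr 1
    rw [hm]; push_cast; ring
  -- reindex B' over S via k ↦ p-1-k
  have hB' : ∏ k ∈ (Finset.range p).erase m, (4*(k:ℤ)+1)
      = ∏ k ∈ S, (4*(p:ℤ) - (4*(k:ℤ)+3)) := by
    apply Finset.prod_nbij' (i := fun k => p-1-k) (j := fun k => p-1-k)
    · intro a ha
      rw [Finset.mem_erase, Finset.mem_range] at ha ⊢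
      omega
    · intro a ha
      rw [hS, Finset.mem_erase, Finset.mem_range] at ha
      rw [Finset.mem_erase, Finset.mem_range]
      omega
    · intro a ha
      rw [Finset.mem_erase, Finset.mem_range] at ha
      omega
    · intro a ha
      rw [hS, Finset.mem_erase, Finset.mem_range] at ha
      omega
    · intro a ha
      rw [Finset.mem_erase, Finset.mem_range] at ha
      omega
  -- the mod p^2 congruence of the two smaller products
  have hd : (p:ℤ)^2 ∣ (∏ k ∈ S, (4*(k:ℤ)+3)) - ∏ k ∈ S, (4*(p:ℤ) - (4*(k:ℤ)+3)) := by
    have hcast : (((∏ k ∈ S, (4*(k:ℤ)+3)) - ∏ k ∈ S, (4*(p:ℤ) - (4*(k:ℤ)+3)) : ℤ)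
        : ZMod (p^2)) = 0 := by
      push_cast
      have hp2 : ((p : ZMod (p^2)))^2 = 0 := by
        rw [← Nat.cast_pow, ZMod.natCast_self]
      have ht : (-(4*(p : ZMod (p^2)))) * (-(4*(p : ZMod (p^2)))) = 0 := by
        linear_combination (16 : ZMod (p^2)) * hp2
      have hneg : ∏ k ∈ S, (4*(p:ZMod (p^2)) - (4*(k:ZMod (p^2))+3))
          = ∏ k ∈ S, ((4*(k:ZMod (p^2))+3) + (-(4*(p:ZMod (p^2))))) := by
        have hcard : S.card = p - 1 := by
          rw [hS, Finset.card_erase_of_mem (by rw [Finset.mem_range]; omega),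
            Finset.card_range]
        calc ∏ k ∈ S, (4*(p:ZMod (p^2)) - (4*(k:ZMod (p^2))+3))
            = ∏ k ∈ S, (-1) * ((4*(k:ZMod (p^2))+3) + (-(4*(p:ZMod (p^2))))) :=
              Finset.prod_congr rfl (fun k _ => by ring)
          _ = (-1)^S.card * ∏ k ∈ S, ((4*(k:ZMod (p^2))+3) + (-(4*(p:ZMod (p^2))))) := by
              rw [Finset.prod_mul_distrib, Finset.prod_const]
          _ = _ := by
              rw [hcard, hm, show 4*m+1-1 = 2*(2*m) by omega, pow_mul]
              norm_num
      rw [hneg, prod_add_of_sq_zero _ ht]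
      obtain ⟨c, hc⟩ := harmonic_dvd p m hp hm hm1
      rw [← hS] at hc
      have hccast : ((∑ k ∈ S, ∏ j ∈ S.erase k, (4*(j:ℤ)+3) : ℤ) : ZMod (p^2))
          = (p : ZMod (p^2)) * (c : ZMod (p^2)) := by
        rw [hc]; push_cast; ring
      push_cast at hccast
      linear_combination (4*(p:ZMod (p^2))) * hccast + 4*(c:ZMod (p^2)) * hp2
    have := (ZMod.intCast_zmod_eq_zero_iff_dvd _ (p^2)).mp hcast
    push_cast at this
    exact_mod_cast this
  rw [hA, hB, hB']
  obtain ⟨c, hc⟩ := hd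
  exact ⟨3*c, by linear_combination 3*(p:ℤ)*hc⟩

/-- For every prime `p ≡ 1 (mod 4)`, `(3/4)_p ≡ 3 * (1/4)_p (mod p^3)`,
i.e. the rational `(3/4)_p - 3 * (1/4)_p` has `p`-adic valuation at least `3`. -/
theorem poch_three_quarter_cong (p : ℕ) (hp : p.Prime) (h4 : p % 4 = 1) :
    padicNorm p ((ascPochhammer ℚ p).eval (3/4) - 3 * (ascPochhammer ℚ p).eval (1/4))
      ≤ (p : ℚ) ^ (-(3 : ℤ)) := by
  haveI := Fact.mk hp
  have h2 := hp.two_le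
  set A : ℤ := ∏ k ∈ Finset.range p, (4*(k:ℤ)+3) with hA
  set B : ℤ := ∏ k ∈ Finset.range p, (4*(k:ℤ)+1) with hB
  have e3 : (ascPochhammer ℚ p).eval (3/4) = ((A : ℚ)) / 4^p := by
    rw [poch_eval_prod, hA]
    push_cast
    rw [show (∏ i ∈ Finset.range p, ((3:ℚ)/4 + i))
        = ∏ i ∈ Finset.range p, ((4*(i:ℚ)+3) / 4) from
      Finset.prod_congr rfl fun i _ => by ring]
    rw [Finset.prod_div_distrib, Finset.prod_const, Finset.card_range]
  have e1 : (ascPochhammer ℚ p).eval (1/4) = ((B : ℚ)) / 4^p := by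
    rw [poch_eval_prod, hB]
    push_cast
    rw [show (∏ i ∈ Finset.range p, ((1:ℚ)/4 + i))
        = ∏ i ∈ Finset.range p, ((4*(i:ℚ)+1) / 4) from
      Finset.prod_congr rfl fun i _ => by ring]
    rw [Finset.prod_div_distrib, Finset.prod_const, Finset.card_range]
  have ediff : (ascPochhammer ℚ p).eval (3/4) - 3 * (ascPochhammer ℚ p).eval (1/4)
      = ((A - 3*B : ℤ) : ℚ) / (4:ℚ)^p := by
    rw [e3, e1]; push_cast; ring
  rw [ediff, padicNorm.div]
  have h4pow : padicNorm p ((4:ℚ)^p) = 1 := by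
    rw [show ((4:ℚ)^p) = (((4^p : ℤ)) : ℚ) by push_cast; ring, padicNorm.int_eq_one_iff]
    intro hdvd
    have h4' : (p:ℤ) ∣ 4 := (Nat.prime_iff_prime_int.mp hp).dvd_of_dvd_pow hdvd
    have h4n : p ∣ 4 := by exact_mod_cast h4'
    have h2' : p ∣ 2 := hp.dvd_of_dvd_pow (n := 2) (by simpa using h4n)
    have := (Nat.prime_dvd_prime_iff_eq hp Nat.prime_two).mp h2'
    omega
  rw [h4pow, div_one]
  have hk : ((p^3 : ℕ) : ℤ) ∣ A - 3*B := by
    push_cast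
    exact key_dvd p hp h4
  have := (padicNorm.dvd_iff_norm_le (p := p) (n := 3) (z := A - 3*B)).mp hk
  simpa using this
end

section
/- For every prime p with p ≡ 1 (mod 4), the product of (3+4k) over 0 ≤ k ≤ p−1 with k ≠ (3p−3)/4 is congruent modulo p^2 to the product of (1+4k) over 0 ≤ k ≤ p−1 with k ≠ (p−1)/4. -/
private lemma lemA (c : ℤ) (f : ℕ → ℤ) (s : Finset ℕ) :
    (∏ k ∈ s, (c + f k)) ≡ (∏ k ∈ s, f k) + c * ∑ k ∈ s, ∏ j ∈ s.erase k, f j [ZMOD c^2] := by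
  induction s using Finset.induction_on with
  | empty => simp
  | @insert a s ha ih =>
    rw [Finset.prod_insert ha, Finset.prod_insert ha, Finset.sum_insert ha,
        Finset.erase_insert ha,
        Finset.sum_congr rfl (fun k hk => by
          rw [Finset.erase_insert_of_ne (fun h => ha (h ▸ hk) : a ≠ k),
              Finset.prod_insert (fun h => ha (Finset.mem_of_mem_erase h))]),
        ← Finset.mul_sum]
    set P := ∏ k ∈ s, f k
    set S := ∑ k ∈ s, ∏ j ∈ s.erase k, f j
    have h2 : (c + f a) * (P + c * S) ≡ f a * P + c * (P + f a * S) [ZMOD c ^ 2] := by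
      have h3 : (c + f a) * (P + c * S) = f a * P + c * (P + f a * S) + c^2 * S := by ring
      unfold Int.ModEq
      rw [h3, Int.add_mul_emod_self_left]
    exact (ih.mul_left _).trans h2

section
variable (p : ℕ) (hp : p.Prime) (m : ℕ) (hm : p = 4*m+1) (hm0 : 0 < m)

example : True := trivial

-- Lemma B
lemma lemB [Fact p.Prime] (hm : p = 4*m+1) (hm0 : 0 < m) :
    (p:ℤ) ∣ ∑ k ∈ (Finset.range p).erase m, ∏ j ∈ ((Finset.range p).erase m).erase k, (1 + 4*(j:ℤ)) := by
  set s := (Finset.range p).erase m with hs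
  rw [← ZMod.intCast_zmod_eq_zero_iff_dvd]
  push_cast
  set g : ℕ → ZMod p := fun k => 1 + 4*(k : ZMod p) with hg
  have h4ne : (4 : ZMod p) ≠ 0 := by
    have : ((4:ℕ) : ZMod p) ≠ 0 := by
      rw [Ne, ZMod.natCast_eq_zero_iff]
      intro h
      have := Nat.le_of_dvd (by norm_num) h
      omega
    simpa using this
  have hginj : ∀ k ∈ Finset.range p, ∀ k' ∈ Finset.range p, g k = g k' → k = k' := by
    intro k hk k' hk' h
    simp only [hg] at h
    have h2 : (k : ZMod p) = (k' : ZMod p) := by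
      have := add_left_cancel h
      exact mul_left_cancel₀ h4ne this
    rw [ZMod.natCast_eq_natCast_iff] at h2
    have := Nat.ModEq.eq_of_lt_of_lt h2 (Finset.mem_range.mp hk) (Finset.mem_range.mp hk')
    exact this
  have hgm : g m = 0 := by
    have : g m = ((4*m+1 : ℕ) : ZMod p) := by push_cast; ring
    rw [this, ← hm, ZMod.natCast_self]
  have hgne : ∀ k ∈ s, g k ≠ 0 := by
    intro k hk h0
    have hkm : k ≠ m := (Finset.mem_erase.mp hk).1
    have hkr : k ∈ Finset.range p := (Finset.mem_erase.mp hk).2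
    have hmr : m ∈ Finset.range p := Finset.mem_range.mpr (by omega)
    exact hkm (hginj k hkr m hmr (h0.trans hgm.symm))
  set W := ∏ k ∈ s, g k with hW
  have hprod_erase : ∀ k ∈ s, ∏ j ∈ s.erase k, g j = (g k)⁻¹ * W := by
    intro k hk
    rw [hW, ← Finset.mul_prod_erase s g hk, ← mul_assoc, inv_mul_cancel₀ (hgne k hk), one_mul]
  rw [Finset.sum_congr rfl hprod_erase, ← Finset.sum_mul]
  have hsum : ∑ k ∈ s, (g k)⁻¹ = 0 := by
    have himg2 : ∑ a ∈ s.image g, a⁻¹ = ∑ k ∈ s, (g k)⁻¹ :=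
      Finset.sum_image
        (fun k hk k' hk' h => hginj k (Finset.mem_erase.mp hk).2 k' (Finset.mem_erase.mp hk').2 h)
    rw [← himg2]
    have himg : s.image g = Finset.univ.erase 0 := by
      apply Finset.eq_of_subset_of_card_le
      · intro a ha
        obtain ⟨k, hk, rfl⟩ := Finset.mem_image.mp ha
        exact Finset.mem_erase.mpr ⟨hgne k hk, Finset.mem_univ _⟩
      · rw [Finset.card_erase_of_mem (Finset.mem_univ _), Finset.card_univ, ZMod.card,
            Finset.card_image_of_injOn
              (fun k hk k' hk' h => hginj k (Finset.mem_erase.mp hk).2 k' (Finset.mem_erase.mp hk').2 h),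
            Finset.card_erase_of_mem (Finset.mem_range.mpr (by omega)), Finset.card_range]
    rw [himg, Finset.sum_erase _ (by simp)]
    have hinv : ∑ a : ZMod p, a⁻¹ = ∑ a : ZMod p, a :=
      Equiv.sum_comp (Equiv.inv (ZMod p)) id
    have h2ne : (2 : ZMod p) ≠ 0 := by
      have h2' : ((2:ℕ) : ZMod p) ≠ 0 := by
        rw [Ne, ZMod.natCast_eq_zero_iff]
        intro h; have := Nat.le_of_dvd (by norm_num) h; omega
      simpa using h2'
    have hzero : ∑ a : ZMod p, a = 0 := by
      have h1 : ∑ a : ZMod p, -a = ∑ a : ZMod p, a := Equiv.sum_comp (Equiv.neg (ZMod p)) id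
      rw [Finset.sum_neg_distrib] at h1
      have h2 : (2 : ZMod p) * ∑ a : ZMod p, a = 0 := by
        rw [two_mul]
        nth_rewrite 1 [← h1]
        exact neg_add_cancel _
      exact (mul_eq_zero.mp h2).resolve_left h2ne
    rw [hinv, hzero]
  rw [hsum, zero_mul]
end


/-- For every prime `p ≡ 1 (mod 4)`,
`∏_{0 ≤ k ≤ p-1, k ≠ (3p-3)/4} (3+4k) ≡ ∏_{0 ≤ k ≤ p-1, k ≠ (p-1)/4} (1+4k) (mod p^2)`. -/
theorem prod_three_four_cong (p : ℕ) (hp : p.Prime) (h4 : p % 4 = 1) :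
    (∏ k ∈ (Finset.range p).erase ((3 * p - 3) / 4), (3 + 4 * (k : ℤ)))
      ≡ (∏ k ∈ (Finset.range p).erase ((p - 1) / 4), (1 + 4 * (k : ℤ))) [ZMOD (p : ℤ)^2] := by
  haveI : Fact p.Prime := ⟨hp⟩
  have hp1 : 1 < p := hp.one_lt
  obtain ⟨m, hm⟩ : ∃ m, p = 4*m+1 := ⟨p/4, by omega⟩
  have hm0 : 0 < m := by omega
  have hk0 : (3*p-3)/4 = 3*m := by omega
  have hk1 : (p-1)/4 = m := by omega
  rw [hk0, hk1]
  set s : Finset ℕ := (Finset.range p).erase m with hs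
  have step1 : (∏ k ∈ (Finset.range p).erase (3*m), (3 + 4*(k:ℤ)))
      = ∏ k ∈ s, ((4*(p:ℤ)) + (-(1 + 4*(k:ℤ)))) := by
    apply Finset.prod_nbij' (fun k => p - 1 - k) (fun k => p - 1 - k)
    · intro a ha
      simp only [Finset.mem_erase, Finset.mem_range, hs] at ha ⊢
      omega
    · intro a ha
      simp only [Finset.mem_erase, Finset.mem_range, hs] at ha ⊢
      omega
    · intro a ha
      simp only [Finset.mem_erase, Finset.mem_range] at ha
      omega
    · intro a ha
      simp only [Finset.mem_erase, Finset.mem_range, hs] at ha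
      omega
    · intro a ha
      simp only [Finset.mem_erase, Finset.mem_range] at ha
      have hcast : ((p - 1 - a : ℕ) : ℤ) = (p:ℤ) - 1 - a := by omega
      rw [hcast]; ring
  have h2 := lemA (4*(p:ℤ)) (fun k => -(1 + 4*(k:ℤ))) s
  have hdvd : ((p:ℤ)^2) ∣ (4*(p:ℤ))^2 := ⟨16, by ring⟩
  have h2' := h2.of_dvd hdvd
  have hmem : m ∈ Finset.range p := Finset.mem_range.mpr (by omega)
  have hcard : s.card = 4*m := by
    rw [hs, Finset.card_erase_of_mem hmem, Finset.card_range]; omega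
  have hprodneg : ∏ k ∈ s, (-(1 + 4*(k:ℤ))) = ∏ k ∈ s, (1 + 4*(k:ℤ)) := by
    calc ∏ k ∈ s, (-(1 + 4*(k:ℤ))) = ∏ k ∈ s, ((-1) * (1 + 4*(k:ℤ))) :=
          Finset.prod_congr rfl (fun _ _ => by ring)
      _ = (∏ _k ∈ s, (-1:ℤ)) * ∏ k ∈ s, (1 + 4*(k:ℤ)) := Finset.prod_mul_distrib
      _ = (-1:ℤ)^s.card * ∏ k ∈ s, (1 + 4*(k:ℤ)) := by rw [Finset.prod_const]
      _ = ∏ k ∈ s, (1 + 4*(k:ℤ)) := by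
          rw [hcard, Even.neg_one_pow ⟨2*m, by ring⟩, one_mul]
  have hsumneg : ∀ k ∈ s, ∏ j ∈ s.erase k, (-(1 + 4*(j:ℤ))) = -(∏ j ∈ s.erase k, (1 + 4*(j:ℤ))) := by
    intro k hk
    have hce : (s.erase k).card = 4*m - 1 := by
      rw [Finset.card_erase_of_mem hk, hcard]
    calc ∏ j ∈ s.erase k, (-(1 + 4*(j:ℤ))) = ∏ j ∈ s.erase k, ((-1) * (1 + 4*(j:ℤ))) :=
          Finset.prod_congr rfl (fun _ _ => by ring)
      _ = (∏ _j ∈ s.erase k, (-1:ℤ)) * ∏ j ∈ s.erase k, (1 + 4*(j:ℤ)) := Finset.prod_mul_distrib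
      _ = (-1:ℤ)^(s.erase k).card * ∏ j ∈ s.erase k, (1 + 4*(j:ℤ)) := by rw [Finset.prod_const]
      _ = -(∏ j ∈ s.erase k, (1 + 4*(j:ℤ))) := by
          rw [hce, Odd.neg_one_pow ⟨2*m-1, by omega⟩, neg_one_mul]
  rw [hprodneg, Finset.sum_congr rfl hsumneg, Finset.sum_neg_distrib] at h2'
  have hB := lemB p m hm hm0
  obtain ⟨c, hc⟩ := hB
  have hfin : (∏ k ∈ s, (1 + 4*(k:ℤ)))
      + 4*(p:ℤ) * (-(∑ k ∈ s, ∏ j ∈ s.erase k, (1 + 4*(j:ℤ))))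
      ≡ ∏ k ∈ s, (1 + 4*(k:ℤ)) [ZMOD (p:ℤ)^2] := by
    rw [Int.modEq_iff_dvd]
    refine ⟨4*c, ?_⟩
    rw [hc]; ring
  rw [step1]
  exact h2'.trans hfin
end

section
/- Let s_n = 64^n · ((1/4)_n)^2 / (n!)^2. For every prime p with p ≡ 1 (mod 4), s_p ≡ s_1 (mod p^2), i.e., s_p ≡ 4 (mod p^2). -/
open Finset

lemma prod_add_nilsq {R : Type*} [CommRing R] {ι : Type*} [DecidableEq ι] (u : R)
    (hu : u * u = 0) (s : Finset ι) (a b : ι → R) :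
    ∏ i ∈ s, (a i + u * b i) =
      ∏ i ∈ s, a i + u * ∑ i ∈ s, b i * ∏ j ∈ s.erase i, a j := by
  induction s using Finset.induction_on with
  | empty => simp
  | insert x s hx ih =>
    rw [prod_insert hx, ih, prod_insert hx, sum_insert hx, erase_insert hx]
    have h2 : ∑ i ∈ s, b i * ∏ j ∈ (insert x s).erase i, a j
        = a x * ∑ i ∈ s, b i * ∏ j ∈ s.erase i, a j := by
      rw [mul_sum]
      refine sum_congr rfl fun i hi => ?_
      rw [erase_insert_of_ne (by rintro rfl; exact hx hi),
        prod_insert (fun h => hx (mem_of_mem_erase h))]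
      ring
    rw [h2]
    linear_combination (b x * ∑ i ∈ s, b i * ∏ j ∈ s.erase i, a j) * hu

lemma sum_range_two_mul {M : Type*} [AddCommMonoid M] (m : ℕ) (g : ℕ → M) :
    ∑ j ∈ range (2 * m), g j = ∑ k ∈ range m, (g (2 * k) + g (2 * k + 1)) := by
  induction m with
  | zero => simp
  | succ n ih =>
    have h : 2 * (n + 1) = 2 * n + 1 + 1 := by ring
    rw [h, sum_range_succ, sum_range_succ, sum_range_succ, ih, add_assoc]

lemma inv_sum_zero (p : ℕ) (hp : p.Prime) (hodd : p % 2 = 1) :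
    ∑ k ∈ range (p - 1), ((k + 1 : ℕ) : ZMod p)⁻¹ = 0 := by
  haveI := Fact.mk hp
  have hp2 := hp.two_le
  apply Finset.sum_involution (g := fun k _ => p - 2 - k)
  · intro k hk
    rw [mem_range] at hk
    have e : p - 2 - k + 1 = p - (k + 1) := by omega
    rw [e, Nat.cast_sub (by omega), ZMod.natCast_self, zero_sub, inv_neg]
    ring
  · intro k hk _
    rw [mem_range] at hk
    omega
  · intro k hk
    rw [mem_range] at hk ⊢
    omega
  · intro k hk
    rw [mem_range] at hk
    omega


-- symmetry: sum of 1/(4k+3) = - sum of 1/(4k+2)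

lemma sym_sum (p m : ℕ) (hp : p.Prime) (hm : p = 4 * m + 1) :
    ∑ k ∈ range m, ((4 * k + 3 : ℕ) : ZMod p)⁻¹ =
      -∑ k ∈ range m, ((4 * k + 2 : ℕ) : ZMod p)⁻¹ := by
  haveI := Fact.mk hp
  rw [← Finset.sum_range_reflect]
  rw [← Finset.sum_neg_distrib]
  refine Finset.sum_congr rfl fun k hk => ?_
  rw [mem_range] at hk
  have e : 4 * (m - 1 - k) + 3 = p - (4 * k + 2) := by omega
  rw [e, Nat.cast_sub (by omega), ZMod.natCast_self, zero_sub, inv_neg]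

lemma pmul_eq_zero_iff (p : ℕ) (hp : p.Prime) (x : ZMod (p ^ 2)) :
    (p : ZMod (p ^ 2)) * x = 0 ↔
      (ZMod.castHom (dvd_pow_self p two_ne_zero) (ZMod p)) x = 0 := by
  haveI : NeZero (p ^ 2) := ⟨pow_ne_zero 2 hp.pos.ne'⟩
  have key : ∀ v : ℕ, p ^ 2 ∣ p * v ↔ p ∣ v := by
    intro v
    rw [sq]
    exact Nat.mul_dvd_mul_iff_left hp.pos
  have hx : ((x.val : ℕ) : ZMod (p ^ 2)) = x := by
    rw [ZMod.natCast_val, ZMod.cast_id]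
  rw [← hx, map_natCast, ← Nat.cast_mul, ZMod.natCast_eq_zero_iff,
    ZMod.natCast_eq_zero_iff]
  exact key x.val

lemma pmul_eq_iff (p : ℕ) (hp : p.Prime) (x y : ZMod (p ^ 2)) :
    (p : ZMod (p ^ 2)) * x = (p : ZMod (p ^ 2)) * y ↔
      (ZMod.castHom (dvd_pow_self p two_ne_zero) (ZMod p)) x =
        (ZMod.castHom (dvd_pow_self p two_ne_zero) (ZMod p)) y := by
  rw [← sub_eq_zero, ← mul_sub, pmul_eq_zero_iff p hp, map_sub, sub_eq_zero]

lemma choose_sub_one_cast (p : ℕ) (hp : p.Prime) :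
    ∀ j, j ≤ p - 1 → ((Nat.choose (p - 1) j : ℕ) : ZMod p) = (-1) ^ j := by
  intro j
  induction j with
  | zero => simp
  | succ j ih =>
    intro hj
    have hid : Nat.choose p (j + 1) = Nat.choose (p - 1) j + Nat.choose (p - 1) (j + 1) := by
      have h1 : p = (p - 1) + 1 := by omega
      rw [h1, Nat.choose_succ_succ, Nat.add_sub_cancel]
    have h0 : ((Nat.choose p (j + 1) : ℕ) : ZMod p) = 0 := by
      rw [ZMod.natCast_eq_zero_iff]
      exact hp.dvd_choose_self (by omega) (by omega)
    rw [hid] at h0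
    push_cast at h0
    rw [ih (by omega)] at h0
    have h2 : ((Nat.choose (p - 1) (j + 1) : ℕ) : ZMod p) = -(-1) ^ j := by
      push_cast
      linear_combination h0
    rw [h2, pow_succ]
    ring

lemma choose_p_cast (p : ℕ) (hp : p.Prime) (k : ℕ) (h1 : 1 ≤ k) (h2 : k ≤ p - 1) :
    ((Nat.choose p k : ℕ) : ZMod (p ^ 2)) * (k : ZMod (p ^ 2)) =
      (p : ZMod (p ^ 2)) * (-1) ^ (k - 1) := by
  have hid : p * Nat.choose (p - 1) (k - 1) = Nat.choose p k * k := by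
    have := Nat.add_one_mul_choose_eq (p - 1) (k - 1)
    have e1 : p - 1 + 1 = p := by omega
    have e2 : k - 1 + 1 = k := by omega
    rwa [e1, e2] at this
  have hcast : (p : ZMod (p ^ 2)) * ((Nat.choose (p - 1) (k - 1) : ℕ) : ZMod (p ^ 2)) =
      ((Nat.choose p k : ℕ) : ZMod (p ^ 2)) * (k : ZMod (p ^ 2)) := by
    rw [← Nat.cast_mul, ← Nat.cast_mul, hid]
  rw [← hcast]
  rw [pmul_eq_iff p hp]
  rw [map_natCast, map_pow, map_neg, map_one]
  exact choose_sub_one_cast p hp (k - 1) (by omega)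

lemma two_pow_sub_one (p : ℕ) (hp : p.Prime) (hodd : p ≠ 2) :
    (2 : ZMod (p ^ 2)) ^ (p - 1) = 1 + p * (((2 ^ (p - 1) - 1) / p : ℕ) : ZMod (p ^ 2)) := by
  haveI := Fact.mk hp
  have h2 : (2 : ZMod p) ≠ 0 := by
    have : ((2 : ℕ) : ZMod p) ≠ 0 := by
      rw [Ne, ZMod.natCast_eq_zero_iff]
      intro h
      exact hodd ((Nat.prime_dvd_prime_iff_eq hp Nat.prime_two).mp h)
    simpa using this
  have hferm : (2 : ZMod p) ^ (p - 1) = 1 := ZMod.pow_card_sub_one_eq_one h2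
  have h1 : (1 : ℕ) ≤ 2 ^ (p - 1) := Nat.one_le_two_pow
  have hd : p ∣ 2 ^ (p - 1) - 1 := by
    rw [← ZMod.natCast_eq_zero_iff, Nat.cast_sub h1]
    push_cast
    rw [hferm]
    ring
  obtain ⟨q, hq⟩ := hd
  have hdivq : (2 ^ (p - 1) - 1) / p = q := by rw [hq, Nat.mul_div_cancel_left q hp.pos]
  have hq2 : 2 ^ (p - 1) = 1 + p * q := by omega
  rw [hdivq]
  calc (2 : ZMod (p ^ 2)) ^ (p - 1) = ((2 ^ (p - 1) : ℕ) : ZMod (p ^ 2)) := by push_cast; ring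
    _ = ((1 + p * q : ℕ) : ZMod (p ^ 2)) := by rw [← hq2]
    _ = 1 + p * (q : ZMod (p ^ 2)) := by push_cast; ring

lemma alt_sum_eq (p : ℕ) (hp : p.Prime) (hodd : p ≠ 2) :
    ∑ k ∈ range (p - 1), (-1 : ZMod p) ^ k * ((k + 1 : ℕ) : ZMod p)⁻¹ =
      2 * (((2 ^ (p - 1) - 1) / p : ℕ) : ZMod p) := by
  haveI := Fact.mk hp
  have hp2 := hp.two_le
  have hp3 : 3 ≤ p := by rcases Nat.lt_or_ge p 3 with h | h; · interval_cases p <;> simp_all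
                         · exact h
  set φ := ZMod.castHom (dvd_pow_self p two_ne_zero) (ZMod p) with hφ
  have hmulinv : ∀ k ∈ range (p - 1), ((k + 1 : ℕ) : ZMod (p^2)) * ((k + 1 : ℕ) : ZMod (p^2))⁻¹ = 1 := by
    intro k hk
    rw [mem_range] at hk
    apply ZMod.coe_mul_inv_eq_one
    apply Nat.Coprime.pow_right
    apply Nat.Coprime.symm
    rw [Nat.Prime.coprime_iff_not_dvd hp]
    intro hdvd
    have := Nat.le_of_dvd (by omega) hdvd
    omega
  -- binomial expansion of 2^p in ZMod p^2
  have hbin : ((2 ^ p : ℕ) : ZMod (p^2)) =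
      2 + ∑ k ∈ range (p - 1), ((Nat.choose p (k + 1) : ℕ) : ZMod (p^2)) := by
    have h1 : ∑ i ∈ range (p + 1), Nat.choose p i = 2 ^ p := Nat.sum_range_choose p
    rw [← h1]
    have h2 : p + 1 = ((p - 1) + 1) + 1 := by omega
    rw [h2, sum_range_succ, sum_range_succ']
    have h3 : p - 1 + 1 = p := by omega
    rw [h3, Nat.choose_self, Nat.choose_zero_right]
    push_cast
    ring
  -- each middle binomial coefficient
  have hterm : ∀ k ∈ range (p - 1), ((Nat.choose p (k + 1) : ℕ) : ZMod (p^2)) =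
      (p : ZMod (p^2)) * ((-1) ^ k * ((k + 1 : ℕ) : ZMod (p^2))⁻¹) := by
    intro k hk
    have hc := choose_p_cast p hp (k + 1) (by omega) (by rw [mem_range] at hk; omega)
    have e1 : k + 1 - 1 = k := by omega
    rw [e1] at hc
    calc ((Nat.choose p (k + 1) : ℕ) : ZMod (p^2))
        = ((Nat.choose p (k + 1) : ℕ) : ZMod (p^2)) * (((k + 1 : ℕ) : ZMod (p^2)) * ((k + 1 : ℕ) : ZMod (p^2))⁻¹) := by
          rw [hmulinv k hk, mul_one]
      _ = (((Nat.choose p (k + 1) : ℕ) : ZMod (p^2)) * ((k + 1 : ℕ) : ZMod (p^2))) * ((k + 1 : ℕ) : ZMod (p^2))⁻¹ := by ring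
      _ = (p : ZMod (p^2)) * ((-1) ^ k * ((k + 1 : ℕ) : ZMod (p^2))⁻¹) := by
          push_cast at hc ⊢; rw [hc]; ring
  have hAR : ((2 ^ p : ℕ) : ZMod (p^2)) =
      2 + (p : ZMod (p^2)) * ∑ k ∈ range (p - 1), (-1) ^ k * ((k + 1 : ℕ) : ZMod (p^2))⁻¹ := by
    rw [hbin, Finset.sum_congr rfl hterm, ← mul_sum]
  -- and via Fermat quotient
  have hq : ((2 ^ p : ℕ) : ZMod (p^2)) =
      2 + (p : ZMod (p^2)) * (2 * (((2 ^ (p - 1) - 1) / p : ℕ) : ZMod (p^2))) := by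
    have h1 : p = (p - 1) + 1 := by omega
    have : ((2 ^ p : ℕ) : ZMod (p^2)) = 2 * (2 : ZMod (p^2)) ^ (p - 1) := by
      rw [h1]; push_cast; ring
    rw [this, two_pow_sub_one p hp hodd]
    ring
  have hpeq : (p : ZMod (p^2)) * ∑ k ∈ range (p - 1), (-1) ^ k * ((k + 1 : ℕ) : ZMod (p^2))⁻¹ =
      (p : ZMod (p^2)) * (2 * (((2 ^ (p - 1) - 1) / p : ℕ) : ZMod (p^2))) := by
    have := hAR.symm.trans hq
    exact add_left_cancel this
  rw [pmul_eq_iff p hp] at hpeq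
  have hterm2 : ∀ k ∈ range (p - 1),
      φ ((-1) ^ k * ((k + 1 : ℕ) : ZMod (p^2))⁻¹) = (-1 : ZMod p) ^ k * ((k + 1 : ℕ) : ZMod p)⁻¹ := by
    intro k hk
    simp only [map_mul, map_pow, map_neg, map_one]
    congr 1
    have := congrArg φ (hmulinv k hk)
    simp only [map_mul, map_natCast, map_one] at this
    exact eq_inv_of_mul_eq_one_right this
  have hL : φ (∑ k ∈ range (p - 1), (-1) ^ k * ((k + 1 : ℕ) : ZMod (p^2))⁻¹) =
      ∑ k ∈ range (p - 1), (-1 : ZMod p) ^ k * ((k + 1 : ℕ) : ZMod p)⁻¹ := by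
    rw [map_sum]; exact Finset.sum_congr rfl hterm2
  have hR : φ (2 * (((2 ^ (p - 1) - 1) / p : ℕ) : ZMod (p^2))) =
      2 * (((2 ^ (p - 1) - 1) / p : ℕ) : ZMod p) := by
    simp only [map_mul, map_natCast, map_ofNat]
  rw [hL, hR] at hpeq
  exact hpeq

lemma even_inv_sum (p m : ℕ) (hp : p.Prime) (hm : p = 4 * m + 1) :
    ∑ k ∈ range (2 * m), ((2 * k + 2 : ℕ) : ZMod p)⁻¹ =
      -(((2 ^ (p - 1) - 1) / p : ℕ) : ZMod p) := by
  haveI := Fact.mk hp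
  have hm1 : 1 ≤ m := by
    rcases Nat.eq_zero_or_pos m with h | h
    · exfalso; rw [h] at hm; simp [hm] at hp; exact Nat.not_prime_one hp
    · exact h
  have hp5 : 5 ≤ p := by omega
  have h41 : p - 1 = 2 * (2 * m) := by omega
  have hOE : ∑ k ∈ range (2 * m), (((2 * k + 1 : ℕ) : ZMod p)⁻¹ + ((2 * k + 2 : ℕ) : ZMod p)⁻¹)
      = 0 := by
    have h0 := inv_sum_zero p hp (by omega)
    rw [show range (p - 1) = range (2 * (2 * m)) from by rw [h41],
      sum_range_two_mul] at h0
    rw [← h0]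
  have hOA : ∑ k ∈ range (2 * m), (((2 * k + 1 : ℕ) : ZMod p)⁻¹ - ((2 * k + 2 : ℕ) : ZMod p)⁻¹)
      = 2 * (((2 ^ (p - 1) - 1) / p : ℕ) : ZMod p) := by
    have h0 := alt_sum_eq p hp (by omega)
    rw [show range (p - 1) = range (2 * (2 * m)) from by rw [h41],
      sum_range_two_mul] at h0
    rw [show ((2 ^ (p - 1) - 1) / p : ℕ) = ((2 ^ (2 * (2 * m)) - 1) / p : ℕ) from by rw [← h41]] at h0 ⊢
    rw [← h0]
    refine sum_congr rfl fun k hk => ?_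
    have e1 : (-1 : ZMod p) ^ (2 * k) = 1 := by rw [pow_mul]; norm_num
    have e2 : (-1 : ZMod p) ^ (2 * k + 1) = -1 := by rw [pow_succ, e1, one_mul]
    rw [e1, e2]
    have e3 : 2 * k + 1 + 1 = 2 * k + 2 := by omega
    rw [e3]
    ring
  have h2ne : (2 : ZMod p) ≠ 0 := by
    have : ((2 : ℕ) : ZMod p) ≠ 0 := by
      rw [Ne, ZMod.natCast_eq_zero_iff]
      intro h
      have := Nat.le_of_dvd (by omega) h
      omega
    simpa using this
  apply mul_left_cancel₀ h2ne
  rw [Finset.sum_add_distrib] at hOE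
  rw [Finset.sum_sub_distrib] at hOA
  set O := ∑ k ∈ range (2 * m), ((2 * k + 1 : ℕ) : ZMod p)⁻¹
  set E := ∑ k ∈ range (2 * m), ((2 * k + 2 : ℕ) : ZMod p)⁻¹
  set q := (((2 ^ (p - 1) - 1) / p : ℕ) : ZMod p)
  linear_combination hOE - hOA

lemma S_eq (p m : ℕ) (hp : p.Prime) (hm : p = 4 * m + 1) :
    ∑ i ∈ range p, (((4 * i + 1) / p : ℕ) : ZMod p) * ((4 * i + 1 : ℕ) : ZMod p)⁻¹ =
      -(((2 ^ (p - 1) - 1) / p : ℕ) : ZMod p) := by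
  haveI := Fact.mk hp
  have hm1 : 1 ≤ m := by
    rcases Nat.eq_zero_or_pos m with h | h
    · exfalso; rw [h] at hm; simp [hm] at hp; exact Nat.not_prime_one hp
    · exact h
  have hp5 : 5 ≤ p := by omega
  set f : ℕ → ZMod p := fun i => (((4 * i + 1) / p : ℕ) : ZMod p) * ((4 * i + 1 : ℕ) : ZMod p)⁻¹
    with hf
  have hsplit : ∑ i ∈ range p, f i =
      ((∑ i ∈ Ico 0 (m + 1), f i + ∑ i ∈ Ico (m + 1) (2 * m + 1), f i) +
        ∑ i ∈ Ico (2 * m + 1) (3 * m + 1), f i) + ∑ i ∈ Ico (3 * m + 1) (4 * m + 1), f i := by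
    rw [Finset.sum_Ico_consecutive f (by omega : 0 ≤ m + 1) (by omega : m + 1 ≤ 2 * m + 1),
      Finset.sum_Ico_consecutive f (by omega : 0 ≤ 2 * m + 1) (by omega : 2 * m + 1 ≤ 3 * m + 1),
      Finset.sum_Ico_consecutive f (by omega : 0 ≤ 3 * m + 1) (by omega : 3 * m + 1 ≤ 4 * m + 1),
      range_eq_Ico, show Ico 0 p = Ico 0 (4 * m + 1) from by rw [hm]]
  have hP1 : ∑ i ∈ Ico 0 (m + 1), f i = 0 := by
    apply Finset.sum_eq_zero
    intro i hi
    rw [mem_Ico] at hi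
    rcases eq_or_lt_of_le (by omega : i ≤ m) with h | h
    · have : ((4 * i + 1 : ℕ) : ZMod p) = 0 := by
        rw [h, ← hm, ZMod.natCast_self]
      rw [hf]; dsimp only; rw [this, inv_zero, mul_zero]
    · have : (4 * i + 1) / p = 0 := Nat.div_eq_of_lt (by omega)
      rw [hf]; dsimp only; rw [this, Nat.cast_zero, zero_mul]
  have hP2 : ∑ i ∈ Ico (m + 1) (2 * m + 1), f i = ∑ k ∈ range m, ((4 * k + 4 : ℕ) : ZMod p)⁻¹ := by
    rw [Finset.sum_Ico_eq_sum_range, show 2 * m + 1 - (m + 1) = m from by omega]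
    refine sum_congr rfl fun k hk => ?_
    rw [mem_range] at hk
    rw [hf]; dsimp only
    rw [show 4 * (m + 1 + k) + 1 = 4 * k + 4 + p from by omega,
      Nat.add_div_right _ (by omega : 0 < p), Nat.div_eq_of_lt (by omega : 4 * k + 4 < p)]
    push_cast [ZMod.natCast_self]
    norm_num
  have hP3 : ∑ i ∈ Ico (2 * m + 1) (3 * m + 1), f i =
      ∑ k ∈ range m, 2 * ((4 * k + 3 : ℕ) : ZMod p)⁻¹ := by
    rw [Finset.sum_Ico_eq_sum_range, show 3 * m + 1 - (2 * m + 1) = m from by omega]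
    refine sum_congr rfl fun k hk => ?_
    rw [mem_range] at hk
    rw [hf]; dsimp only
    rw [show 4 * (2 * m + 1 + k) + 1 = 4 * k + 3 + 2 * p from by omega,
      Nat.add_mul_div_right _ _ (by omega : 0 < p), Nat.div_eq_of_lt (by omega : 4 * k + 3 < p)]
    push_cast [ZMod.natCast_self]
    norm_num
  have hP4 : ∑ i ∈ Ico (3 * m + 1) (4 * m + 1), f i =
      ∑ k ∈ range m, 3 * ((4 * k + 2 : ℕ) : ZMod p)⁻¹ := by
    rw [Finset.sum_Ico_eq_sum_range, show 4 * m + 1 - (3 * m + 1) = m from by omega]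
    refine sum_congr rfl fun k hk => ?_
    rw [mem_range] at hk
    rw [hf]; dsimp only
    rw [show 4 * (3 * m + 1 + k) + 1 = 4 * k + 2 + 3 * p from by omega,
      Nat.add_mul_div_right _ _ (by omega : 0 < p), Nat.div_eq_of_lt (by omega : 4 * k + 2 < p)]
    push_cast [ZMod.natCast_self]
    norm_num
  rw [hsplit, hP1, hP2, hP3, hP4, zero_add]
  rw [← Finset.mul_sum, ← Finset.mul_sum, sym_sum p m hp hm]
  have hE : ∑ k ∈ range (2 * m), ((2 * k + 2 : ℕ) : ZMod p)⁻¹ =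
      ∑ k ∈ range m, (((4 * k + 2 : ℕ) : ZMod p)⁻¹ + ((4 * k + 4 : ℕ) : ZMod p)⁻¹) := by
    rw [sum_range_two_mul]
    refine sum_congr rfl fun k hk => ?_
    rw [show 2 * (2 * k) + 2 = 4 * k + 2 from by ring,
      show 2 * (2 * k + 1) + 2 = 4 * k + 4 from by ring]
  rw [← even_inv_sum p m hp hm, hE, Finset.sum_add_distrib]
  ring

lemma not_dvd_four_mul (p m i : ℕ) (hm : p = 4 * m + 1) (hi : i < p)
    (hne : i ≠ m) : ¬ p ∣ (4 * i + 1) := by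
  rintro ⟨c, hc⟩
  have hc4 : c < 4 := by
    by_contra h
    push_neg at h
    have := Nat.mul_le_mul_left p h
    omega
  interval_cases c <;> omega

lemma mod_eq_of_cast_eq (p X a : ℕ) (hp : 0 < p) (h : (X : ZMod p) = (a : ZMod p))
    (ha : a < p) : X % p = a := by
  haveI : NeZero p := ⟨hp.ne'⟩
  have := congrArg ZMod.val h
  rw [ZMod.val_natCast, ZMod.val_natCast] at this
  rw [this, Nat.mod_eq_of_lt ha]

lemma prod_residues (p m : ℕ) (hp : p.Prime) (hm : p = 4 * m + 1) :
    ∏ i ∈ (range p).erase m, ((4 * i + 1) % p) = (p - 1).factorial := by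
  have hp1 : 0 < p := hp.pos
  haveI : NeZero p := ⟨hp1.ne'⟩
  have hmc : 4 * (m : ZMod p) + 1 = 0 := by
    have : ((4 * m + 1 : ℕ) : ZMod p) = 0 := by rw [← hm, ZMod.natCast_self]
    push_cast at this
    exact this
  have hri : ∀ b, 1 ≤ b → b < p → (4 * (((b - 1) * (3 * m + 1)) % p) + 1) % p = b := by
    intro b hb1 hb2
    apply mod_eq_of_cast_eq p _ b hp1 _ hb2
    push_cast [ZMod.natCast_mod, Nat.cast_sub hb1]
    linear_combination (3 * ((b : ZMod p) - 1)) * hmc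
  have hli : ∀ a, a < p → a ≠ m → (((4 * a + 1) % p - 1) * (3 * m + 1)) % p = a := by
    intro a ha hne
    have hnd := not_dvd_four_mul p m a hm ha hne
    have hz : (4 * a + 1) % p ≠ 0 := fun h => hnd (Nat.dvd_iff_mod_eq_zero.mpr h)
    apply mod_eq_of_cast_eq p _ a hp1 _ ha
    push_cast [Nat.cast_sub (by omega : 1 ≤ (4 * a + 1) % p), ZMod.natCast_mod]
    linear_combination (3 * (a : ZMod p)) * hmc
  have key : ∏ i ∈ (range p).erase m, ((4 * i + 1) % p) = ∏ r ∈ Ico 1 p, r := by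
    apply Finset.prod_nbij' (i := fun i => (4 * i + 1) % p)
      (j := fun b => ((b - 1) * (3 * m + 1)) % p)
    · intro a ha
      rw [mem_erase, mem_range] at ha
      rw [mem_Ico]
      have hnd := not_dvd_four_mul p m a hm ha.2 ha.1
      have hz : (4 * a + 1) % p ≠ 0 := fun h => hnd (Nat.dvd_iff_mod_eq_zero.mpr h)
      exact ⟨by omega, Nat.mod_lt _ hp1⟩
    · intro b hb
      rw [mem_Ico] at hb
      rw [mem_erase, mem_range]
      refine ⟨?_, Nat.mod_lt _ hp1⟩
      intro h
      have := hri b hb.1 hb.2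
      rw [h, show 4 * m + 1 = p from hm.symm, Nat.mod_self] at this
      omega
    · intro a ha
      rw [mem_erase, mem_range] at ha
      exact hli a ha.2 ha.1
    · intro b hb
      rw [mem_Ico] at hb
      exact hri b hb.1 hb.2
    · intro a ha
      rfl
  rw [key, show p = (p - 1) + 1 from by omega]
  exact Finset.prod_Ico_id_eq_factorial (p - 1)

lemma main_cong (p m : ℕ) (hp : p.Prime) (hm : p = 4 * m + 1) :
    (2 : ZMod (p ^ 2)) ^ (p - 1) *
        ((∏ i ∈ (range p).erase m, (4 * i + 1) : ℕ) : ZMod (p ^ 2)) =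
      (((p - 1).factorial : ℕ) : ZMod (p ^ 2)) := by
  haveI := Fact.mk hp
  have hm1 : 1 ≤ m := by
    rcases Nat.eq_zero_or_pos m with h | h
    · exfalso; rw [h] at hm; simp [hm] at hp; exact Nat.not_prime_one hp
    · exact h
  have hp5 : 5 ≤ p := by omega
  set R := ZMod (p ^ 2)
  set F := ZMod p
  set φ := ZMod.castHom (dvd_pow_self p two_ne_zero) (ZMod p) with hφ
  set t := (range p).erase m with ht
  have hpp : (p : R) * (p : R) = 0 := by
    rw [← Nat.cast_mul, show p * p = p ^ 2 from (sq p).symm, ZMod.natCast_self]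
  set T : R := ∑ i ∈ t, (((4 * i + 1) / p : ℕ) : R) *
      ∏ j ∈ t.erase i, (((4 * j + 1) % p : ℕ) : R) with hT
  have hBR : ((∏ i ∈ t, (4 * i + 1) : ℕ) : R) = (((p - 1).factorial : ℕ) : R) + (p : R) * T := by
    rw [Nat.cast_prod]
    have hterm : ∀ i ∈ t, ((4 * i + 1 : ℕ) : R) =
        (((4 * i + 1) % p : ℕ) : R) + (p : R) * (((4 * i + 1) / p : ℕ) : R) := by
      intro i _
      rw [← Nat.cast_mul, ← Nat.cast_add]
      exact congrArg _ (Nat.mod_add_div (4 * i + 1) p).symm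
    rw [Finset.prod_congr rfl hterm, prod_add_nilsq (p : R) hpp]
    rw [← Nat.cast_prod, prod_residues p m hp hm]
  have hBF : ((∏ i ∈ t, (4 * i + 1) : ℕ) : F) = (((p - 1).factorial : ℕ) : F) := by
    have := congrArg φ hBR
    rw [map_add, map_mul, map_natCast, map_natCast, map_natCast, ZMod.natCast_self,
      zero_mul, add_zero] at this
    exact this
  have hzero : (p : R) * ((((2 ^ (p - 1) - 1) / p : ℕ) : R) * (((p - 1).factorial : ℕ) : R) + T)
      = 0 := by
    rw [pmul_eq_zero_iff p hp]
    rw [map_add, map_mul, map_natCast, map_natCast, hT, map_sum]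
    have hterm : ∀ i ∈ t, φ ((((4 * i + 1) / p : ℕ) : R) *
        ∏ j ∈ t.erase i, (((4 * j + 1) % p : ℕ) : R)) =
        (((4 * i + 1) / p : ℕ) : F) * (((4 * i + 1 : ℕ) : F)⁻¹ *
          ((∏ i ∈ t, (4 * i + 1) : ℕ) : F)) := by
      intro i hi
      rw [map_mul, map_natCast, map_prod]
      congr 1
      have hne : ((4 * i + 1 : ℕ) : F) ≠ 0 := by
        rw [Ne, ZMod.natCast_eq_zero_iff]
        rw [ht, mem_erase, mem_range] at hi
        exact not_dvd_four_mul p m i hm hi.2 hi.1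
      have hme : ((4 * i + 1 : ℕ) : F) * ∏ j ∈ t.erase i, ((4 * j + 1 : ℕ) : F) =
          ((∏ i ∈ t, (4 * i + 1) : ℕ) : F) := by
        rw [Nat.cast_prod]
        exact Finset.mul_prod_erase t (fun j => ((4 * j + 1 : ℕ) : F)) hi
      have heach : ∀ j ∈ t.erase i, φ ((((4 * j + 1) % p : ℕ) : R)) = ((4 * j + 1 : ℕ) : F) := by
        intro j _
        rw [map_natCast, ZMod.natCast_mod]
      rw [Finset.prod_congr rfl heach, ← hme, ← mul_assoc, inv_mul_cancel₀ hne, one_mul]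
    rw [Finset.sum_congr rfl hterm, hBF]
    have hsum : ∑ i ∈ t, (((4 * i + 1) / p : ℕ) : F) * (((4 * i + 1 : ℕ) : F)⁻¹ *
        (((p - 1).factorial : ℕ) : F)) =
        (∑ i ∈ range p, (((4 * i + 1) / p : ℕ) : F) * ((4 * i + 1 : ℕ) : F)⁻¹) *
          (((p - 1).factorial : ℕ) : F) := by
      rw [Finset.sum_mul]
      rw [show ∑ i ∈ range p, (((4 * i + 1) / p : ℕ) : F) * ((4 * i + 1 : ℕ) : F)⁻¹ *
          (((p - 1).factorial : ℕ) : F) =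
          ∑ i ∈ t, (((4 * i + 1) / p : ℕ) : F) * ((4 * i + 1 : ℕ) : F)⁻¹ *
          (((p - 1).factorial : ℕ) : F) from ?_]
      · exact Finset.sum_congr rfl fun i _ => by ring
      · rw [ht]
        symm
        apply Finset.sum_erase
        have : ((4 * m + 1 : ℕ) : F) = 0 := by rw [← hm, ZMod.natCast_self]
        rw [this, inv_zero, mul_zero, zero_mul]
    rw [hsum, S_eq p m hp hm]
    ring
  rw [two_pow_sub_one p hp (by omega), hBR]
  set q := (((2 ^ (p - 1) - 1) / p : ℕ) : R)
  set W := (((p - 1).factorial : ℕ) : R)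
  linear_combination hzero + q * T * hpp

lemma int_dvd (p m : ℕ) (hp : p.Prime) (hm : p = 4 * m + 1) :
    (p : ℤ) ^ 2 ∣ 4 ^ p * ((∏ i ∈ (range p).erase m, (4 * i + 1) : ℕ) : ℤ) ^ 2
      - 4 * (((p - 1).factorial : ℕ) : ℤ) ^ 2 := by
  have key : ((4 ^ p * ((∏ i ∈ (range p).erase m, (4 * i + 1) : ℕ) : ℤ) ^ 2
      - 4 * (((p - 1).factorial : ℕ) : ℤ) ^ 2 : ℤ) : ZMod (p ^ 2)) = 0 := by
    simp only [Int.cast_sub, Int.cast_mul, Int.cast_pow, Int.cast_natCast, Int.cast_ofNat]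
    have hmain := main_cong p m hp hm
    have h2 : (4 : ZMod (p ^ 2)) ^ p = 4 * ((2 : ZMod (p ^ 2)) ^ (p - 1)) ^ 2 := by
      rw [show (4 : ZMod (p ^ 2)) = 2 ^ 2 from by norm_num, ← pow_mul, ← pow_mul, ← pow_add]
      congr 1
      have := hp.two_le
      omega
    linear_combination (((∏ i ∈ (range p).erase m, (4 * i + 1) : ℕ) : ZMod (p ^ 2))^2) * h2 +
      (4 * ((2 : ZMod (p ^ 2)) ^ (p - 1) * ((∏ i ∈ (range p).erase m, (4 * i + 1) : ℕ) : ZMod (p ^ 2)) + (((p - 1).factorial : ℕ) : ZMod (p ^ 2)))) * hmain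
  rwa [ZMod.intCast_zmod_eq_zero_iff_dvd, show ((p ^ 2 : ℕ) : ℤ) = (p : ℤ) ^ 2 from by push_cast; ring] at key

lemma poch_eval (n : ℕ) :
    (ascPochhammer ℚ n).eval (1 / 4 : ℚ) * 4 ^ n = ∏ i ∈ range n, ((4 * i + 1 : ℕ) : ℚ) := by
  induction n with
  | zero => simp
  | succ n ih =>
    rw [ascPochhammer_succ_eval, prod_range_succ, ← ih]
    push_cast [-Nat.cast_prod]
    ring

/-- Let `s_n = 64^n ((1/4)_n)^2 / (n!)^2`. For every prime `p ≡ 1 (mod 4)`,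
`s_p ≡ s_1 (mod p^2)`, i.e. `s_p ≡ 4 (mod p^2)`. -/
theorem s_p_cong (p : ℕ) (hp : p.Prime) (h4 : p % 4 = 1)
    (s : ℕ → ℚ)
    (hs : ∀ n, s n = (64 : ℚ) ^ n * ((ascPochhammer ℚ n).eval (1/4)) ^ 2 / (n.factorial : ℚ) ^ 2) :
    padicNorm p (s p - s 1) ≤ (p : ℚ) ^ (-(2 : ℤ)) ∧
      padicNorm p (s p - 4) ≤ (p : ℚ) ^ (-(2 : ℤ)) := by
  haveI := Fact.mk hp
  have hp2 := hp.two_le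
  set m := p / 4 with hm4
  have hm : p = 4 * m + 1 := by omega
  have hm1 : 1 ≤ m := by
    have := hp.one_lt
    omega
  set B : ℕ := ∏ i ∈ (range p).erase m, (4 * i + 1) with hB
  set W : ℕ := (p - 1).factorial with hW
  set N : ℤ := 4 ^ p * (B : ℤ) ^ 2 - 4 * (W : ℤ) ^ 2 with hN
  have hdvd : (p : ℤ) ^ 2 ∣ N := int_dvd p m hp hm
  have hs1 : s 1 = 4 := by
    rw [hs]
    simp [ascPochhammer_one]
    norm_num
  have hprodsplit : ((∏ i ∈ range p, (4 * i + 1) : ℕ) : ℚ) = (p : ℚ) * (B : ℚ) := by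
    rw [← Finset.mul_prod_erase (range p) _ (mem_range.mpr (by omega : m < p)), ← hB, ← hm]
    push_cast
    ring
  have h4ne : ((4 : ℚ) ^ p) ≠ 0 := pow_ne_zero _ (by norm_num)
  have hpne : ((p : ℚ)) ≠ 0 := Nat.cast_ne_zero.mpr hp.pos.ne'
  have hWne : ((W : ℚ)) ≠ 0 := Nat.cast_ne_zero.mpr (Nat.factorial_ne_zero _)
  have hE : (ascPochhammer ℚ p).eval (1 / 4 : ℚ) = (p : ℚ) * B / 4 ^ p := by
    rw [eq_div_iff h4ne, poch_eval p, ← hprodsplit, Nat.cast_prod]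
  have hfac : (p.factorial : ℚ) = (p : ℚ) * W := by
    rw [hW, ← Nat.mul_factorial_pred hp.ne_zero]
    push_cast
    ring
  have hps : s p - 4 = (N : ℚ) / (W : ℚ) ^ 2 := by
    rw [hs, hE, hfac, hN]
    have h64 : (64 : ℚ) ^ p = ((4 : ℚ) ^ p) ^ 3 := by
      rw [show (64 : ℚ) = 4 ^ 3 from by norm_num, ← pow_mul, mul_comm 3 p, pow_mul]
    push_cast
    rw [h64]
    field_simp
  have key : padicNorm p (s p - 4) ≤ (p : ℚ) ^ (-(2 : ℤ)) := by
    rw [hps, padicNorm.div]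
    have hWnorm : padicNorm p ((W : ℚ) ^ 2) = 1 := by
      have hcast : ((W : ℚ) ^ 2) = (((W : ℤ) ^ 2 : ℤ) : ℚ) := by push_cast; ring
      rw [hcast, padicNorm.int_eq_one_iff]
      intro hdvd2
      have hpz : Prime (p : ℤ) := Nat.prime_iff_prime_int.mp hp
      have hdW : (p : ℤ) ∣ (W : ℤ) := hpz.dvd_of_dvd_pow hdvd2
      have : p ∣ W := Int.ofNat_dvd.mp hdW
      have := (Nat.Prime.dvd_factorial hp).mp this
      omega
    rw [hWnorm, div_one]
    have := (padicNorm.dvd_iff_norm_le (p := p) (n := 2) (z := N)).mp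
      (by push_cast; exact hdvd)
    simpa using this
  exact ⟨by rw [hs1]; exact key, key⟩
end

section
/- Let p = 6q+1 be prime and H_n = ∑_{k=1}^n 1/k. Then 2·(2^{6q}−1)/p ≡ H_{2q} − H_q (mod p), where both sides are interpreted as p-adic integers (Fermat quotient identity). -/
open Finset

namespace FQH

variable {p : ℕ}

/-- harmonic sum in `ZMod p` -/
def Hmz (p n : ℕ) : ZMod p := ∑ k ∈ Finset.Icc 1 n, (k : ZMod p)⁻¹

/-- odd harmonic sum in `ZMod p` -/
def Odz (p n : ℕ) : ZMod p := ∑ i ∈ Finset.range n, ((2*i+1 : ℕ) : ZMod p)⁻¹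

lemma cast_ne_zero' [Fact p.Prime] {k : ℕ} (h0 : k ≠ 0) (hk : k < p) :
    ((k : ZMod p)) ≠ 0 := by
  intro h
  rw [ZMod.natCast_eq_zero_iff] at h
  exact absurd (Nat.le_of_dvd (Nat.pos_of_ne_zero h0) h) (not_le.mpr hk)

lemma Hmz_succ (n : ℕ) : Hmz p (n+1) = Hmz p n + ((n+1 : ℕ) : ZMod p)⁻¹ := by
  unfold Hmz
  rw [← Finset.sum_Icc_succ_top (by omega : 1 ≤ n + 1)]

lemma Hmz_zero : Hmz p 0 = 0 := by simp [Hmz]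

/-- Catalan-type identity for the alternating harmonic sum -/
lemma altsum [Fact p.Prime] : ∀ n : ℕ, 2*n < p →
    ∑ j ∈ Finset.range (2*n), (-1 : ZMod p)^j * ((j+1 : ℕ) : ZMod p)⁻¹
      = Hmz p (2*n) - Hmz p n := by
  intro n
  induction n with
  | zero => simp [Hmz_zero]
  | succ n ih =>
    intro hlt
    have hih := ih (by omega)
    have h2 : 2*(n+1) = (2*n + 1) + 1 := by ring
    rw [h2, Finset.sum_range_succ, Finset.sum_range_succ, hih]
    have e1 : (2*n+1) + 1 = 2*n + 2 := by ring
    rw [e1, Hmz_succ, Hmz_succ, Hmz_succ]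
    have ea : ((2*n+1 : ℕ) : ZMod p) ≠ 0 := cast_ne_zero' (by omega) (by omega)
    have eb : ((2*n+1+1 : ℕ) : ZMod p) ≠ 0 := cast_ne_zero' (by omega) (by omega)
    have ec : ((n+1 : ℕ) : ZMod p) ≠ 0 := cast_ne_zero' (by omega) (by omega)
    have hbc : ((2*n+1+1 : ℕ) : ZMod p) = 2 * ((n+1 : ℕ) : ZMod p) := by push_cast; ring
    have hpow : (-1 : ZMod p)^(2*n) = 1 := by
      rw [pow_mul]; norm_num
    rw [pow_succ, hpow]
    rw [hbc] at eb ⊢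
    have h2z : (2 : ZMod p) ≠ 0 := by
      intro h; apply eb; rw [h]; ring
    rw [mul_inv]
    have h22 : (2 : ZMod p) * (2 : ZMod p)⁻¹ = 1 := mul_inv_cancel₀ h2z
    linear_combination (-(((n+1 : ℕ) : ZMod p)⁻¹)) * h22
/-- `H_{p-1} ≡ 0 (mod p)` -/
lemma Hmz_top (hp : p.Prime) (hodd : p % 2 = 1) [Fact p.Prime] : Hmz p (p-1) = 0 := by
  unfold Hmz
  apply Finset.sum_involution (fun a _ => p - a)
  · intro a ha
    rw [Finset.mem_Icc] at ha
    have hc : ((p - a : ℕ) : ZMod p) = -(a : ZMod p) := by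
      rw [Nat.cast_sub (by omega)]
      simp [ZMod.natCast_self]
    rw [hc, inv_neg, add_neg_cancel]
  · intro a ha _
    rw [Finset.mem_Icc] at ha
    omega
  · intro a ha
    rw [Finset.mem_Icc] at ha ⊢
    omega
  · intro a ha
    rw [Finset.mem_Icc] at ha
    omega

/-- odd/even splitting of harmonic sums -/
lemma oddsum [Fact p.Prime] : ∀ n : ℕ, 2*n < p →
    Odz p n = Hmz p (2*n) - (2 : ZMod p)⁻¹ * Hmz p n := by
  intro n
  induction n with
  | zero => simp [Hmz_zero, Odz]
  | succ n ih =>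
    intro hlt
    have hih := ih (by omega)
    unfold Odz at hih ⊢
    rw [Finset.sum_range_succ, hih]
    have h2 : 2*(n+1) = (2*n + 1) + 1 := by ring
    rw [h2]
    have e1 : (2*n+1) + 1 = 2*n + 2 := by ring
    rw [e1, Hmz_succ, Hmz_succ, Hmz_succ]
    have eb : ((2*n+1+1 : ℕ) : ZMod p) ≠ 0 := cast_ne_zero' (by omega) (by omega)
    have hbc : ((2*n+1+1 : ℕ) : ZMod p) = 2 * ((n+1 : ℕ) : ZMod p) := by push_cast; ring
    rw [hbc, mul_inv]
    ring

variable {q : ℕ}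

/-- reindexing the middle block -/
lemma middle (hp : p.Prime) (hq : p = 6*q+1) [Fact p.Prime] :
    ∑ k ∈ Finset.Icc (2*q+1) (3*q), ((k : ZMod p))⁻¹ = -2 * Odz p q := by
  have h1 : Finset.Icc (2*q+1) (3*q) = Finset.Ico (2*q+1) (3*q+1) := by
    rw [Finset.Ico_add_one_right_eq_Icc]
  rw [h1, Finset.sum_Ico_eq_sum_range]
  have h2 : 3*q+1 - (2*q+1) = q := by omega
  rw [h2]
  rw [← Finset.sum_range_reflect]
  unfold Odz
  rw [Finset.mul_sum]
  apply Finset.sum_congr rfl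
  intro i hi
  rw [Finset.mem_range] at hi
  have ha : 2*q+1+(q-1-i) = 3*q - i := by omega
  rw [ha]
  have key : ((2*(3*q-i) : ℕ) : ZMod p) + ((2*i+1 : ℕ) : ZMod p) = 0 := by
    rw [← Nat.cast_add]
    have : 2*(3*q-i) + (2*i+1) = p := by omega
    rw [this, ZMod.natCast_self]
  have ha0 : ((3*q-i : ℕ) : ZMod p) ≠ 0 := cast_ne_zero' (by omega) (by omega)
  have hy0 : ((2*i+1 : ℕ) : ZMod p) ≠ 0 := cast_ne_zero' (by omega) (by omega)
  have hcast : ((2*(3*q-i) : ℕ) : ZMod p) = 2 * ((3*q-i : ℕ) : ZMod p) := by push_cast; ring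
  rw [hcast] at key
  have hy : ((2*i+1 : ℕ) : ZMod p) = -(2 * ((3*q-i : ℕ) : ZMod p)) := by linear_combination key
  rw [hy]
  rw [inv_neg, mul_inv]
  have h2z : (2 : ZMod p) ≠ 0 := by
    have h2 := cast_ne_zero' (p := p) (k := 2) (by omega) (by omega)
    simpa using h2
  have h22 : (2 : ZMod p) * (2 : ZMod p)⁻¹ = 1 := mul_inv_cancel₀ h2z
  linear_combination (-((3*q-i : ℕ) : ZMod p)⁻¹) * h22
/-- `C(p-1, j) ≡ (-1)^j (mod p)` -/
lemma choose_cast (hp : p.Prime) [Fact p.Prime] :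
    ∀ j : ℕ, j ≤ p - 1 → (((p-1).choose j : ℕ) : ZMod p) = (-1 : ZMod p)^j := by
  intro j
  induction j with
  | zero => simp
  | succ j ih =>
    intro hj
    have hih := ih (by omega)
    have hps : p - 1 + 1 = p := by have := hp.pos; omega
    have hcs : (p-1).choose j + (p-1).choose (j+1) = p.choose (j+1) := by
      have h := Nat.choose_succ_succ (p-1) j
      rw [Nat.succ_eq_add_one, Nat.succ_eq_add_one, hps] at h
      exact h.symm
    have hdvd : p ∣ p.choose (j+1) := hp.dvd_choose_self (by omega) (by have := hp.pos; omega)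
    have h0 : ((p.choose (j+1) : ℕ) : ZMod p) = 0 :=
      (ZMod.natCast_eq_zero_iff _ _).mpr hdvd
    have h1 : (((p-1).choose j : ℕ) : ZMod p) + (((p-1).choose (j+1) : ℕ) : ZMod p) = 0 := by
      rw [← Nat.cast_add, hcs, h0]
    rw [pow_succ]
    linear_combination h1 - hih

variable {q : ℕ}

/-- core congruence in `ZMod p` -/
lemma core (hp : p.Prime) (hq : p = 6*q+1) (hq1 : 1 ≤ q) [Fact p.Prime] :
    ∑ j ∈ Finset.range (p-1), (((p-1).choose j : ℕ) : ZMod p) * ((j+1 : ℕ) : ZMod p)⁻¹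
      = Hmz p (2*q) - Hmz p q := by
  have hstep1 : ∑ j ∈ Finset.range (p-1), (((p-1).choose j : ℕ) : ZMod p) * ((j+1 : ℕ) : ZMod p)⁻¹
      = ∑ j ∈ Finset.range (p-1), (-1 : ZMod p)^j * ((j+1 : ℕ) : ZMod p)⁻¹ := by
    apply Finset.sum_congr rfl
    intro j hj
    rw [Finset.mem_range] at hj
    rw [choose_cast hp j (by omega)]
  rw [hstep1]
  have hp1 : p - 1 = 2*(3*q) := by omega
  rw [hp1, altsum (p := p) (3*q) (by omega)]
  have htop : Hmz p (2*(3*q)) = 0 := by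
    have := Hmz_top hp (by omega)
    rwa [show p - 1 = 2*(3*q) by omega] at this
  rw [htop]
  -- now need : - Hmz p (3q) = Hmz p (2q) - Hmz p q
  have hsplit : Hmz p (3*q) = Hmz p (2*q) + ∑ k ∈ Finset.Icc (2*q+1) (3*q), ((k : ZMod p))⁻¹ := by
    unfold Hmz
    rw [show (1 : ℕ) = 0 + 1 by rfl, Finset.Icc_add_one_left_eq_Ioc, Finset.Icc_add_one_left_eq_Ioc, zero_add, Finset.Icc_add_one_left_eq_Ioc]
    rw [← Finset.sum_Ioc_consecutive _ (by omega : (0:ℕ) ≤ 2*q) (by omega : 2*q ≤ 3*q)]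
  have hmid := middle hp hq
  have hodd := oddsum (p := p) q (by omega)
  have h2z : (2 : ZMod p) ≠ 0 := by
    have h2 := cast_ne_zero' (p := p) (k := 2) (by omega) (by omega)
    simpa using h2
  have h22 : (2 : ZMod p) * (2 : ZMod p)⁻¹ = 1 := mul_inv_cancel₀ h2z
  rw [hsplit, hmid, hodd]
  linear_combination (-(Hmz p q)) * h22
/-- cast of exact natural division in `ZMod p` -/
lemma natdiv_cast [Fact p.Prime] {N k : ℕ} (hd : k ∣ N) (hk : ((k : ℕ) : ZMod p) ≠ 0) :
    ((N / k : ℕ) : ZMod p) = (N : ZMod p) * ((k : ℕ) : ZMod p)⁻¹ := by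
  rw [eq_mul_inv_iff_mul_eq₀ hk, ← Nat.cast_mul, Nat.div_mul_cancel hd]

/-- the exact rational identity for the Fermat quotient -/
lemma qident {q : ℕ} (hppos : 0 < p) (hq : p = 6*q+1) :
    (2:ℚ) * (((2:ℚ)^(6*q) - 1)/p) = ∑ j ∈ Finset.range (p-1), (((p-1).choose j : ℕ) : ℚ)/(j+1) := by
  have hp0 : (p:ℚ) ≠ 0 := Nat.cast_ne_zero.mpr (by omega)
  have hps : p - 1 + 1 = p := by omega
  have hterm : ∀ j ∈ Finset.range (p-1),
      (p:ℚ) * ((((p-1).choose j : ℕ):ℚ)/(j+1)) = ((p.choose (j+1) : ℕ) : ℚ) := by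
    intro j hj
    have hnat : p * (p-1).choose j = p.choose (j+1) * (j+1) := by
      have h := Nat.add_one_mul_choose_eq (p-1) j
      rwa [hps] at h
    have hc : (p:ℚ) * (((p-1).choose j : ℕ):ℚ) = ((p.choose (j+1):ℕ):ℚ) * ((j+1:ℕ):ℚ) := by
      exact_mod_cast congrArg (Nat.cast : ℕ → ℚ) hnat
    have hj1 : ((j:ℚ)+1) ≠ 0 := by positivity
    push_cast at hc
    field_simp
    linear_combination hc
  have hsum : (p:ℚ) * (∑ j ∈ Finset.range (p-1), (((p-1).choose j : ℕ) : ℚ)/(j+1))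
      = ∑ j ∈ Finset.range (p-1), ((p.choose (j+1):ℕ):ℚ) := by
    rw [Finset.mul_sum]; exact Finset.sum_congr rfl hterm
  have h1 : ∑ i ∈ Finset.range (p+1), p.choose i = 2^p := Nat.sum_range_choose p
  have h2 : ∑ i ∈ Finset.range (p+1), p.choose i
      = ∑ i ∈ Finset.range p, p.choose i + p.choose p := Finset.sum_range_succ _ p
  have h3 : ∑ i ∈ Finset.range (p-1+1), p.choose i
      = ∑ j ∈ Finset.range (p-1), p.choose (j+1) + p.choose 0 := Finset.sum_range_succ' _ _
  rw [hps] at h3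
  rw [Nat.choose_self] at h2
  rw [Nat.choose_zero_right] at h3
  have h4 : ∑ j ∈ Finset.range (p-1), p.choose (j+1) + 2 = 2^p := by
    rw [← h1, h2, h3]
  have h5 : ∑ j ∈ Finset.range (p-1), ((p.choose (j+1):ℕ):ℚ) = 2^p - 2 := by
    have := congrArg (Nat.cast : ℕ → ℚ) h4
    push_cast at this
    linarith
  apply mul_left_cancel₀ hp0
  rw [hsum, h5]
  have hpow : (2:ℚ)^p = 2^(6*q) * 2 := by rw [hq, pow_succ]
  field_simp
  linear_combination -hpow

end FQH

/-- Let `p = 6q+1` be prime and `H_n = ∑_{k=1}^n 1/k`. Then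
`2 (2^{6q}-1)/p ≡ H_{2q} - H_q (mod p)`. -/
theorem fermat_quotient_harmonic (p q : ℕ) (hp : p.Prime) (hq : p = 6 * q + 1)
    (H : ℕ → ℚ) (hH : ∀ n, H n = ∑ k ∈ Finset.Icc 1 n, (1 : ℚ) / k) :
    padicNorm p (2 * (((2 : ℚ) ^ (6 * q) - 1) / p) - (H (2 * q) - H q))
      ≤ (p : ℚ) ^ (-(1 : ℤ)) := by
  haveI := Fact.mk hp
  have hq1 : 1 ≤ q := by
    rcases Nat.eq_zero_or_pos q with h|h
    · exfalso
      rw [h] at hq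
      norm_num at hq
      rw [hq] at hp
      exact Nat.not_prime_one hp
    · exact h
  rw [hH, hH, FQH.qident hp.pos hq]
  set N : ℕ := (p-1).factorial with hN
  set zA : ℕ := ∑ j ∈ Finset.range (p-1), (p-1).choose j * (N/(j+1)) with hzA
  set zB : ℕ := ∑ k ∈ Finset.Icc 1 (2*q), N/k with hzB
  set zC : ℕ := ∑ k ∈ Finset.Icc 1 q, N/k with hzC
  set z : ℤ := (zA : ℤ) - zB + zC with hz
  -- rational identities
  have hA : ((zA:ℕ):ℚ) = (N:ℚ) * ∑ j ∈ Finset.range (p-1), (((p-1).choose j : ℕ) : ℚ)/(j+1) := by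
    rw [hzA, Nat.cast_sum, Finset.mul_sum]
    apply Finset.sum_congr rfl
    intro j hj
    rw [Finset.mem_range] at hj
    have hd : (j+1) ∣ N := Nat.dvd_factorial (by omega) (by omega)
    have hj0 : ((j+1:ℕ):ℚ) ≠ 0 := by positivity
    rw [Nat.cast_mul, Nat.cast_div hd hj0]
    push_cast
    ring
  have hBgen : ∀ m : ℕ, m ≤ p - 1 →
      ((∑ k ∈ Finset.Icc 1 m, N/k : ℕ):ℚ) = (N:ℚ) * ∑ k ∈ Finset.Icc 1 m, (1:ℚ)/k := by
    intro m hm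
    rw [Nat.cast_sum, Finset.mul_sum]
    apply Finset.sum_congr rfl
    intro k hk
    rw [Finset.mem_Icc] at hk
    have hd : k ∣ N := Nat.dvd_factorial (by omega) (by omega)
    have hk0 : ((k:ℕ):ℚ) ≠ 0 := Nat.cast_ne_zero.mpr (by omega)
    rw [Nat.cast_div hd hk0]
    field_simp
  have hB := hBgen (2*q) (by omega)
  have hC := hBgen q (by omega)
  have hcastQ : ((z:ℤ):ℚ) = (zA:ℚ) - (zB:ℚ) + (zC:ℚ) := by
    rw [hz]
    simp only [Int.cast_add, Int.cast_sub, Int.cast_natCast]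
  have hzQ : ((z:ℤ):ℚ) = (N:ℚ) * (∑ j ∈ Finset.range (p-1), (((p-1).choose j : ℕ) : ℚ)/(j+1)
      - (∑ k ∈ Finset.Icc 1 (2*q), (1:ℚ)/k - ∑ k ∈ Finset.Icc 1 q, (1:ℚ)/k)) := by
    rw [hcastQ, hA, hB, hC]
    ring
  -- ZMod identities
  have hA' : ((zA:ℕ):ZMod p) = (N:ZMod p) *
      ∑ j ∈ Finset.range (p-1), (((p-1).choose j : ℕ) : ZMod p) * ((j+1:ℕ):ZMod p)⁻¹ := by
    rw [hzA, Nat.cast_sum, Finset.mul_sum]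
    apply Finset.sum_congr rfl
    intro j hj
    rw [Finset.mem_range] at hj
    have hd : (j+1) ∣ N := Nat.dvd_factorial (by omega) (by omega)
    have hj0 : ((j+1:ℕ):ZMod p) ≠ 0 := FQH.cast_ne_zero' (by omega) (by omega)
    rw [Nat.cast_mul, FQH.natdiv_cast hd hj0]
    ring
  have hBgen' : ∀ m : ℕ, m ≤ p - 1 →
      ((∑ k ∈ Finset.Icc 1 m, N/k : ℕ):ZMod p) = (N:ZMod p) * FQH.Hmz p m := by
    intro m hm
    rw [FQH.Hmz, Nat.cast_sum, Finset.mul_sum]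
    apply Finset.sum_congr rfl
    intro k hk
    rw [Finset.mem_Icc] at hk
    have hd : k ∣ N := Nat.dvd_factorial (by omega) (by omega)
    have hk0 : ((k:ℕ):ZMod p) ≠ 0 := FQH.cast_ne_zero' (by omega) (by omega)
    rw [FQH.natdiv_cast hd hk0]
  have hB' := hBgen' (2*q) (by omega)
  have hC' := hBgen' q (by omega)
  have hcore := FQH.core hp hq hq1
  have hcastF : ((z:ℤ) : ZMod p) = (zA:ZMod p) - (zB:ZMod p) + (zC:ZMod p) := by
    rw [hz]
    simp only [Int.cast_add, Int.cast_sub, Int.cast_natCast]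
  have hzF : ((z:ℤ) : ZMod p) = 0 := by
    rw [hcastF, hA', hB', hC', hcore]
    ring
  have hdvdz : (p:ℤ) ∣ z := (ZMod.intCast_zmod_eq_zero_iff_dvd z p).mp hzF
  have hNne : (N:ℚ) ≠ 0 := Nat.cast_ne_zero.mpr (Nat.factorial_ne_zero _)
  have hnormN : padicNorm p ((N:ℤ):ℚ) = 1 := by
    rw [padicNorm.int_eq_one_iff]
    rw [Int.natCast_dvd_natCast]
    intro hdN
    rw [hp.dvd_factorial] at hdN
    omega
  have hnormz : padicNorm p ((z:ℤ):ℚ) ≤ (p:ℚ)^(-(1:ℤ)) := by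
    have h := (padicNorm.dvd_iff_norm_le (p := p) (n := 1) (z := z)).mp (by simpa using hdvdz)
    simpa using h
  have hmul : padicNorm p ((z:ℤ):ℚ) = padicNorm p ((N:ℤ):ℚ) *
      padicNorm p (∑ j ∈ Finset.range (p-1), (((p-1).choose j : ℕ) : ℚ)/(j+1)
      - (∑ k ∈ Finset.Icc 1 (2*q), (1:ℚ)/k - ∑ k ∈ Finset.Icc 1 q, (1:ℚ)/k)) := by
    rw [← padicNorm.mul]
    congr 1
  rw [hnormN, one_mul] at hmul
  rw [← hmul]
  exact hnormz
end

section
/- Let p = 6q+1 be prime and H_n = ∑_{k=1}^n 1/k. Then H_{3q} ≡ H_q − H_{2q} (mod p), as a congruence of p-adic integers. -/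
open Finset

/-- Split a sum over `Icc 1 (2n)` into odd and even indexed parts. -/
lemma sum_Icc_two_mul {M : Type*} [AddCommMonoid M] (g : ℕ → M) (n : ℕ) :
    ∑ k ∈ Icc 1 (2 * n), g k = ∑ j ∈ Icc 1 n, (g (2 * j - 1) + g (2 * j)) := by
  induction n with
  | zero => simp
  | succ n ih =>
    have h1 : 2 * (n + 1) = (2 * n + 1) + 1 := by ring
    rw [h1, Finset.sum_Icc_succ_top (by omega), Finset.sum_Icc_succ_top (by omega), ih,
      Finset.sum_Icc_succ_top (by omega)]
    have e1 : 2 * (n + 1) - 1 = 2 * n + 1 := by omega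
    have e2 : 2 * (n + 1) = 2 * n + 1 + 1 := by omega
    rw [e1, ← e2, h1]
    abel

lemma key_zmod (p q : ℕ) (hp : p.Prime) (hq : p = 6 * q + 1) :
    (∑ k ∈ Icc 1 (3 * q), ((k : ZMod p))⁻¹) + (∑ k ∈ Icc 1 (2 * q), ((k : ZMod p))⁻¹)
      - ∑ k ∈ Icc 1 q, ((k : ZMod p))⁻¹ = 0 := by
  haveI : Fact p.Prime := ⟨hp⟩
  have hq1 : 1 ≤ q := by
    rcases Nat.eq_zero_or_pos q with h | h
    · subst h; simp at hq; exact absurd (hq ▸ hp) (by norm_num)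
    · exact h
  have h2 : (2 : ZMod p) ≠ 0 := by
    have : ((2 : ℕ) : ZMod p) ≠ 0 := by
      rw [Ne, ZMod.natCast_eq_zero_iff]
      intro h
      have := Nat.le_of_dvd (by norm_num) h
      omega
    simpa using this
  have hinv : ∀ k : ℕ, k ≤ p → (((p - k : ℕ) : ZMod p))⁻¹ = -((k : ZMod p))⁻¹ := by
    intro k hk
    rw [Nat.cast_sub hk, ZMod.natCast_self, zero_sub, inv_neg]
  -- reflection reindexing
  have hrefl : ∀ (a b : ℕ) (f : ℕ → ZMod p), 1 ≤ a → b ≤ 6 * q →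
      ∑ k ∈ Icc (p - b) (p - a), f (p - k) = ∑ k ∈ Icc a b, f k := by
    intro a b f ha hb
    refine Finset.sum_nbij' (fun k => p - k) (fun k => p - k) ?_ ?_ ?_ ?_ ?_ <;>
      intro k hk <;> simp only [mem_Icc] at * <;> first | omega | rfl
  -- sums
  set f : ℕ → ZMod p := fun k => ((k : ZMod p))⁻¹ with hf
  set g : ℕ → ZMod p := fun k => (-1) ^ (k + 1) * ((k : ZMod p))⁻¹ with hg
  -- S0 : full sum vanishes
  have S0 : ∑ k ∈ Icc 1 (6 * q), f k = 0 := by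
    have h := hrefl 1 (6 * q) f (le_refl 1) (le_refl _)
    have e1 : p - 6 * q = 1 := by omega
    have e2 : p - 1 = 6 * q := by omega
    rw [e1, e2] at h
    have h' : ∑ k ∈ Icc 1 (6 * q), f (p - k) = -∑ k ∈ Icc 1 (6 * q), f k := by
      rw [← Finset.sum_neg_distrib]
      refine Finset.sum_congr rfl fun k hk => ?_
      simp only [mem_Icc] at hk
      exact hinv k (by omega)
    have hS : ∑ k ∈ Icc 1 (6 * q), f k = -∑ k ∈ Icc 1 (6 * q), f k := h.symm.trans h'
    have h2' : (2 : ZMod p) * (∑ k ∈ Icc 1 (6 * q), f k) = 0 := by linear_combination hS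
    exact (mul_eq_zero.mp h2').resolve_left h2
  -- S24 : middle symmetric sum vanishes
  have S24 : ∑ k ∈ Icc (2 * q + 1) (4 * q), f k = 0 := by
    have h := hrefl (2 * q + 1) (4 * q) f (by omega) (by omega)
    have e1 : p - 4 * q = 2 * q + 1 := by omega
    have e2 : p - (2 * q + 1) = 4 * q := by omega
    rw [e1, e2] at h
    have h' : ∑ k ∈ Icc (2 * q + 1) (4 * q), f (p - k) =
        -∑ k ∈ Icc (2 * q + 1) (4 * q), f k := by
      rw [← Finset.sum_neg_distrib]
      refine Finset.sum_congr rfl fun k hk => ?_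
      simp only [mem_Icc] at hk
      exact hinv k (by omega)
    have hS := h.symm.trans h'
    have h2' : (2 : ZMod p) * (∑ k ∈ Icc (2 * q + 1) (4 * q), f k) = 0 := by
      linear_combination hS
    exact (mul_eq_zero.mp h2').resolve_left h2
  -- the reflection identity for the alternating summand
  have hgrefl : ∀ k : ℕ, 1 ≤ k → k ≤ 6 * q → g (p - k) = g k := by
    intro k hk1 hk2
    have hodd : (-1 : ZMod p) ^ (p - k + 1) = -(-1) ^ (k + 1) := by
      rcases Nat.even_or_odd k with ⟨m, hm⟩ | ⟨m, hm⟩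
      · have e1 : p - k + 1 = 2 * (3 * q + 1 - m) := by omega
        have e2 : k + 1 = 2 * m + 1 := by omega
        rw [e1, e2, pow_mul, neg_one_sq, one_pow, pow_succ, pow_mul, neg_one_sq, one_pow,
          one_mul, neg_neg]
      · have e1 : p - k + 1 = 2 * (3 * q - m) + 1 := by omega
        have e2 : k + 1 = 2 * (m + 1) := by omega
        rw [e1, e2, pow_succ, pow_mul, neg_one_sq, one_pow, one_mul, pow_mul, neg_one_sq, one_pow]
    simp only [hg]
    rw [hodd, hinv k (by omega)]
    ring
  -- A64 : alternating tail equals a(4q)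
  have A64 : ∑ k ∈ Icc (2 * q + 1) (6 * q), g k = ∑ k ∈ Icc 1 (4 * q), g k := by
    have h := hrefl (2 * q + 1) (6 * q) g (by omega) (le_refl _)
    have e1 : p - 6 * q = 1 := by omega
    have e2 : p - (2 * q + 1) = 4 * q := by omega
    rw [e1, e2] at h
    rw [← h]
    refine Finset.sum_congr rfl fun k hk => ?_
    simp only [mem_Icc] at hk
    exact hgrefl k (by omega) (by omega)
  -- F1 : a (2n) = s (2n) - s n
  have F1 : ∀ n : ℕ, ∑ k ∈ Icc 1 (2 * n), g k =
      (∑ k ∈ Icc 1 (2 * n), f k) - ∑ k ∈ Icc 1 n, f k := by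
    intro n
    rw [sum_Icc_two_mul g n, sum_Icc_two_mul f n, ← Finset.sum_sub_distrib]
    refine Finset.sum_congr rfl fun j hj => ?_
    simp only [mem_Icc] at hj
    have hodd : (-1 : ZMod p) ^ (2 * j - 1 + 1) = 1 := by
      have : 2 * j - 1 + 1 = 2 * j := by omega
      rw [this, pow_mul, neg_one_sq, one_pow]
    have heven : (-1 : ZMod p) ^ (2 * j + 1) = -1 := by
      rw [pow_succ, pow_mul, neg_one_sq, one_pow, one_mul]
    have hcast2 : ((2 * j : ℕ) : ZMod p) = 2 * (j : ZMod p) := by push_cast; ring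
    have h2j : ((2 * j : ℕ) : ZMod p)⁻¹ = 2⁻¹ * ((j : ℕ) : ZMod p)⁻¹ := by
      rw [hcast2, mul_inv]
    simp only [hg, hf, hodd, heven, one_mul]
    rw [h2j]
    have h22 : (2 : ZMod p) * 2⁻¹ = 1 := mul_inv_cancel₀ h2
    linear_combination (-(((j : ℕ) : ZMod p))⁻¹) * h22
  -- assemble
  have e6 : 6 * q = 2 * (3 * q) := by ring
  have e4 : 4 * q = 2 * (2 * q) := by ring
  have e2' : 2 * q = 2 * q := rfl
  have Fa6 : ∑ k ∈ Icc 1 (6 * q), g k =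
      (∑ k ∈ Icc 1 (6 * q), f k) - ∑ k ∈ Icc 1 (3 * q), f k := by
    rw [e6]; exact F1 (3 * q)
  have Fa4 : ∑ k ∈ Icc 1 (4 * q), g k =
      (∑ k ∈ Icc 1 (4 * q), f k) - ∑ k ∈ Icc 1 (2 * q), f k := by
    rw [e4]; exact F1 (2 * q)
  have Fa2 : ∑ k ∈ Icc 1 (2 * q), g k =
      (∑ k ∈ Icc 1 (2 * q), f k) - ∑ k ∈ Icc 1 q, f k := F1 q
  have split64 : (∑ k ∈ Icc 1 (2 * q), g k) + ∑ k ∈ Icc (2 * q + 1) (6 * q), g k =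
      ∑ k ∈ Icc 1 (6 * q), g k := by
    rw [show (2 * q + 1) = (2 * q) + 1 from rfl, Finset.Icc_add_one_left_eq_Ioc,
      show (1 : ℕ) = 0 + 1 from rfl, Finset.Icc_add_one_left_eq_Ioc]
    exact Finset.sum_Ioc_consecutive g (by omega) (by omega)
  have split24 : (∑ k ∈ Icc 1 (2 * q), f k) + ∑ k ∈ Icc (2 * q + 1) (4 * q), f k =
      ∑ k ∈ Icc 1 (4 * q), f k := by
    rw [show (2 * q + 1) = (2 * q) + 1 from rfl, Finset.Icc_add_one_left_eq_Ioc,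
      show (1 : ℕ) = 0 + 1 from rfl, Finset.Icc_add_one_left_eq_Ioc]
    exact Finset.sum_Ioc_consecutive f (by omega) (by omega)
  linear_combination S0 - S24 - A64 + Fa6 - Fa4 - Fa2 + split64 + split24

/-- Let `p = 6q+1` be prime and `H_n = ∑_{k=1}^n 1/k`. Then
`H_{3q} ≡ H_q - H_{2q} (mod p)`. -/
theorem harmonic_3q_cong (p q : ℕ) (hp : p.Prime) (hq : p = 6 * q + 1)
    (H : ℕ → ℚ) (hH : ∀ n, H n = ∑ k ∈ Finset.Icc 1 n, (1 : ℚ) / k) :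
    padicNorm p (H (3 * q) - (H q - H (2 * q))) ≤ (p : ℚ) ^ (-(1 : ℤ)) := by
  haveI : Fact p.Prime := ⟨hp⟩
  set c : ℕ := (3 * q).factorial with hc
  have hc0 : (c : ℚ) ≠ 0 := by
    simp [hc, Nat.factorial_ne_zero]
  have hdvd : ∀ k : ℕ, 1 ≤ k → k ≤ 3 * q → k ∣ c := fun k h1 h3 =>
    Nat.dvd_factorial (by omega) h3
  set N : ℤ := (∑ k ∈ Finset.Icc 1 (3 * q), ((c / k : ℕ) : ℤ))
      + (∑ k ∈ Finset.Icc 1 (2 * q), ((c / k : ℕ) : ℤ))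
      - ∑ k ∈ Finset.Icc 1 q, ((c / k : ℕ) : ℤ) with hN
  have hsumQ : ∀ n : ℕ, n ≤ 3 * q →
      (∑ k ∈ Finset.Icc 1 n, (((c / k : ℕ) : ℚ))) = (c : ℚ) * ∑ k ∈ Finset.Icc 1 n, (1 : ℚ) / k := by
    intro n hn
    rw [Finset.mul_sum]
    refine Finset.sum_congr rfl fun k hk => ?_
    simp only [Finset.mem_Icc] at hk
    rw [Nat.cast_div (hdvd k hk.1 (by omega)) (by exact_mod_cast (by omega : k ≠ 0)), mul_one_div]
  have hNQ : (N : ℚ) = (c : ℚ) * (H (3 * q) - (H q - H (2 * q))) := by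
    rw [hH, hH, hH, hN]
    simp only [Int.cast_sub, Int.cast_add, Int.cast_sum, Int.cast_natCast]
    rw [hsumQ (3 * q) (by omega), hsumQ (2 * q) (by omega), hsumQ q (by omega)]
    ring
  have hpN : ((p : ℕ) : ℤ) ∣ N := by
    rw [← ZMod.intCast_zmod_eq_zero_iff_dvd]
    have hzsum : ∀ n : ℕ, n ≤ 3 * q →
        (∑ k ∈ Finset.Icc 1 n, (((c / k : ℕ) : ZMod p))) =
          (c : ZMod p) * ∑ k ∈ Finset.Icc 1 n, ((k : ZMod p))⁻¹ := by
      intro n hn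
      rw [Finset.mul_sum]
      refine Finset.sum_congr rfl fun k hk => ?_
      simp only [Finset.mem_Icc] at hk
      have hk0 : ((k : ℕ) : ZMod p) ≠ 0 := by
        rw [Ne, ZMod.natCast_eq_zero_iff]
        intro h
        have := Nat.le_of_dvd (by omega) h
        omega
      rw [Nat.cast_div (hdvd k hk.1 (by omega)) hk0, div_eq_mul_inv]
    rw [hN]
    simp only [Int.cast_sub, Int.cast_add, Int.cast_sum, Int.cast_natCast]
    rw [hzsum (3 * q) (by omega), hzsum (2 * q) (by omega), hzsum q (by omega)]
    linear_combination (c : ZMod p) * key_zmod p q hp hq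
  have hD : H (3 * q) - (H q - H (2 * q)) = (N : ℚ) / (c : ℚ) := by
    rw [hNQ]
    field_simp
  rw [hD, padicNorm.div]
  have hcnorm : padicNorm p ((c : ℚ)) = 1 := by
    rw [show ((c : ℕ) : ℚ) = (((c : ℕ) : ℤ) : ℚ) by push_cast; ring]
    rw [padicNorm.int_eq_one_iff]
    rw [Int.natCast_dvd_natCast]
    rw [hc, hp.dvd_factorial]
    omega
  have hNnorm : padicNorm p ((N : ℚ)) ≤ (p : ℚ) ^ (-(1 : ℤ)) := by
    have := (padicNorm.dvd_iff_norm_le (p := p) (n := 1) (z := N)).mp (by simpa using hpN)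
    simpa using this
  rw [hcnorm, div_one]
  exact hNnorm
end

section
/- Let t_n = 108^n·(1/6)_n·(1/3)_n/(n!)^2. For every prime p ≡ 1 (mod 6), t_p ≡ t_1 (mod p^2), i.e., t_p ≡ 6 (mod p^2). -/
open Finset Nat
namespace TP


/-- In a ring where `q * q = 0`, products of `1 + q*c` expand linearly. -/
lemma prod_one_add {R : Type*} [CommRing R] {q : R} (hq : q * q = 0) {ι : Type*}
    (s : Finset ι) (c : ι → R) :
    (∏ i ∈ s, (1 + q * c i)) = 1 + q * ∑ i ∈ s, c i := by
  classical
  induction s using Finset.cons_induction with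
  | empty => simp
  | cons a s ha ih =>
      rw [Finset.prod_cons, Finset.sum_cons, ih]
      linear_combination (c a * ∑ i ∈ s, c i) * hq

variable {p : ℕ}

def phi (p : ℕ) : ZMod (p ^ 2) →+* ZMod p :=
  ZMod.castHom (dvd_pow_self p (by norm_num)) (ZMod p)

lemma pp_zero (hp : 0 < p) : (p : ZMod (p ^ 2)) * (p : ZMod (p ^ 2)) = 0 := by
  rw [← Nat.cast_mul, ← pow_two, ZMod.natCast_self]

lemma phi_natCast (n : ℕ) : phi p ((n : ZMod (p ^ 2))) = (n : ZMod p) := map_natCast _ n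

lemma exists_eq_p_mul (hp : 0 < p) (x : ZMod (p ^ 2)) (h : phi p x = 0) :
    ∃ c, x = (p : ZMod (p ^ 2)) * c := by
  haveI : NeZero (p ^ 2) := ⟨by positivity⟩
  have hx : ((x.val : ℕ) : ZMod (p ^ 2)) = x := ZMod.natCast_zmod_val x
  have h2 : ((x.val : ℕ) : ZMod p) = 0 := by
    rw [← phi_natCast, hx]; exact h
  obtain ⟨d, hd⟩ := (ZMod.natCast_eq_zero_iff _ _).mp h2
  exact ⟨(d : ZMod (p ^ 2)), by rw [← hx, hd]; push_cast; ring⟩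

lemma p_mul_eq_zero (hp : 0 < p) (x : ZMod (p ^ 2)) (h : phi p x = 0) :
    (p : ZMod (p ^ 2)) * x = 0 := by
  obtain ⟨c, rfl⟩ := exists_eq_p_mul hp x h
  rw [← mul_assoc, pp_zero hp, zero_mul]

lemma p_mul_congr (hp : 0 < p) (x y : ZMod (p ^ 2)) (h : phi p x = phi p y) :
    (p : ZMod (p ^ 2)) * x = (p : ZMod (p ^ 2)) * y := by
  have := p_mul_eq_zero hp (x - y) (by rw [map_sub, h, sub_self])
  linear_combination this

lemma isUnit_of_phi (hp : p.Prime) (x : ZMod (p ^ 2)) (h : phi p x ≠ 0) : IsUnit x := by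
  haveI : NeZero (p ^ 2) := ⟨pow_ne_zero 2 hp.pos.ne'⟩
  have hx : ((x.val : ℕ) : ZMod (p ^ 2)) = x := ZMod.natCast_zmod_val x
  rw [← hx]
  rw [ZMod.isUnit_iff_coprime]
  have hnd : ¬ p ∣ x.val := by
    intro hd
    apply h
    rw [← hx, phi_natCast, (ZMod.natCast_eq_zero_iff _ _).mpr hd]
  exact Nat.Coprime.pow_right _ ((Nat.coprime_comm.mp (hp.coprime_iff_not_dvd.mpr hnd)))

lemma inv_unique {n : ℕ} (x y : ZMod n) (hx : IsUnit x) (h : x * y = 1) : x⁻¹ = y := by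
  have h2 := ZMod.inv_mul_of_unit x hx
  calc x⁻¹ = x⁻¹ * (x * y) := by rw [h, mul_one]
  _ = (x⁻¹ * x) * y := by ring
  _ = y := by rw [h2, one_mul]

lemma inv_neg_unit {n : ℕ} (x : ZMod n) (hx : IsUnit x) : (-x)⁻¹ = -(x⁻¹) := by
  apply inv_unique _ _ hx.neg
  rw [neg_mul_neg, ZMod.mul_inv_of_unit x hx]

lemma phi_inv (hp : p.Prime) (x : ZMod (p ^ 2)) (h : phi p x ≠ 0) :
    phi p (x⁻¹) = (phi p x)⁻¹ := by
  haveI : Fact p.Prime := ⟨hp⟩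
  have h1 : phi p x * phi p (x⁻¹) = 1 := by
    rw [← map_mul, ZMod.mul_inv_of_unit x (isUnit_of_phi hp x h), map_one]
  exact (inv_eq_of_mul_eq_one_right h1).symm

lemma unit_split (x y : ZMod (p ^ 2)) (hx : IsUnit x) :
    x + (p : ZMod (p ^ 2)) * y = x * (1 + (p : ZMod (p ^ 2)) * (x⁻¹ * y)) := by
  have h1 : x * x⁻¹ = 1 := ZMod.mul_inv_of_unit x hx
  linear_combination (-((p : ZMod (p ^ 2)) * y)) * h1



lemma seven_le (hp : p.Prime) (h6 : p % 6 = 1) : 7 ≤ p := by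
  rcases Nat.lt_or_ge p 7 with h | h
  · have h2 := hp.two_le; omega
  · exact h

lemma sum_univ_inv [NeZero p] (hp : p.Prime) (h7 : 7 ≤ p) : ∑ y : ZMod p, y⁻¹ = 0 := by
  haveI : Fact p.Prime := ⟨hp⟩
  have h1 : ∑ y : ZMod p, y⁻¹ = ∑ y : ZMod p, (-y)⁻¹ :=
    (Fintype.sum_equiv (Equiv.neg (ZMod p)) _ _ (fun y => rfl)).symm
  have h2 : ∑ y : ZMod p, (-y)⁻¹ = -∑ y : ZMod p, y⁻¹ := by
    rw [← Finset.sum_neg_distrib]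
    exact Finset.sum_congr rfl fun y _ => inv_neg
  have h3 : (2 : ZMod p) ≠ 0 := by
    have : ((2 : ℕ) : ZMod p) ≠ 0 := by
      rw [Ne, ZMod.natCast_eq_zero_iff]
      intro hd
      have := Nat.le_of_dvd (by norm_num) hd
      omega
    simpa using this
  have h4 : (2 : ZMod p) * ∑ y : ZMod p, y⁻¹ = 0 := by
    rw [two_mul]
    nth_rewrite 2 [h1]
    rw [h2]; ring
  rcases mul_eq_zero.mp h4 with h | h
  · exact absurd h h3
  · exact h

lemma sum_range_cast {M : Type*} [AddCommMonoid M] [NeZero p] (f : ZMod p → M) :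
    ∑ k ∈ range p, f ((k : ZMod p)) = ∑ y : ZMod p, f y := by
  exact Finset.sum_nbij' (fun k => ((k : ZMod p))) (fun (y : ZMod p) => y.val)
    (fun a _ => mem_univ _) (fun y _ => mem_range.mpr (ZMod.val_lt y))
    (fun a ha => ZMod.val_cast_of_lt (mem_range.mp ha))
    (fun y _ => ZMod.natCast_zmod_val y) (fun a _ => rfl)

lemma sum_shift_inv [NeZero p] (hp : p.Prime) (h7 : 7 ≤ p) (c : ZMod p) :
    ∑ k ∈ range p, ((k : ZMod p) - c)⁻¹ = 0 := by
  rw [sum_range_cast (fun y => (y - c)⁻¹)]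
  have heq := Fintype.sum_equiv (Equiv.subRight c) (fun y : ZMod p => (y - c)⁻¹)
    (fun y => y⁻¹) (fun y => rfl)
  rw [heq]
  exact sum_univ_inv hp h7

lemma sum_erase_inv [NeZero p] (hp : p.Prime) (h7 : 7 ≤ p) (a k₀ : ℕ) (hk₀ : k₀ < p) :
    ∑ k ∈ (range p).erase k₀, ((a : ZMod p) * ((k : ZMod p) - (k₀ : ZMod p)))⁻¹ = 0 := by
  haveI : Fact p.Prime := ⟨hp⟩
  have key := Finset.add_sum_erase (range p)
    (fun k => ((a : ZMod p) * ((k : ZMod p) - (k₀ : ZMod p)))⁻¹) (mem_range.mpr hk₀)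
  have hall : ∑ k ∈ range p, ((a : ZMod p) * ((k : ZMod p) - (k₀ : ZMod p)))⁻¹ = 0 := by
    have hsplit : ∀ k : ℕ, ((a : ZMod p) * ((k : ZMod p) - (k₀ : ZMod p)))⁻¹
        = (a : ZMod p)⁻¹ * ((k : ZMod p) - (k₀ : ZMod p))⁻¹ := fun k => mul_inv _ _
    simp_rw [hsplit]
    rw [← Finset.mul_sum, sum_shift_inv hp h7, mul_zero]
  rw [hall] at key
  simpa using key

lemma sum_inv_succ_range [NeZero p] (hp : p.Prime) (h7 : 7 ≤ p) :
    ∑ j ∈ range (p - 1), (((j + 1 : ℕ) : ZMod p))⁻¹ = 0 := by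
  haveI : Fact p.Prime := ⟨hp⟩
  have hp1 : p - 1 + 1 = p := by omega
  have key := Finset.sum_range_succ' (fun k => ((k : ℕ) : ZMod p)⁻¹) (p - 1)
  rw [hp1] at key
  have hall : ∑ k ∈ range p, ((k : ZMod p))⁻¹ = 0 := by
    rw [sum_range_cast (fun y => y⁻¹)]
    exact sum_univ_inv hp h7
  rw [hall] at key
  push_cast at key ⊢
  simpa using key.symm



lemma prod_erase_lin (p k₀ : ℕ) (hk₀ : k₀ < p) :
    ∏ k ∈ (range p).erase k₀, ((k : ℤ) - (k₀ : ℤ))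
      = (-1) ^ k₀ * (k₀ ! : ℤ) * ((p - 1 - k₀)! : ℤ) := by
  have hsplit : (range p).erase k₀ = range k₀ ∪ Ico (k₀ + 1) p := by
    ext k
    simp only [mem_erase, mem_range, mem_union, mem_Ico]
    omega
  have hdisj : Disjoint (range k₀) (Ico (k₀ + 1) p) := by
    rw [Finset.disjoint_left]
    intro k hk hk2
    simp only [mem_range] at hk
    simp only [mem_Ico] at hk2
    omega
  rw [hsplit, prod_union hdisj]
  have h1 : ∏ k ∈ range k₀, ((k : ℤ) - (k₀ : ℤ)) = (-1) ^ k₀ * (k₀ ! : ℤ) := by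
    rw [← Finset.prod_range_reflect (fun k => ((k : ℤ) - (k₀ : ℤ))) k₀]
    have : ∀ j ∈ range k₀, ((k₀ - 1 - j : ℕ) : ℤ) - (k₀ : ℤ) = -(((j : ℤ)) + 1) := by
      intro j hj
      rw [mem_range] at hj
      omega
    rw [Finset.prod_congr rfl this]
    have : ∀ j ∈ range k₀, -(((j : ℤ)) + 1) = (-1) * (((j : ℤ)) + 1) := by intros; ring
    rw [Finset.prod_congr rfl this, Finset.prod_mul_distrib, Finset.prod_const, card_range]
    congr 1
    have := Finset.prod_range_add_one_eq_factorial k₀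
    calc ∏ j ∈ range k₀, ((j : ℤ) + 1) = ((∏ j ∈ range k₀, (j + 1) : ℕ) : ℤ) := by push_cast; rfl
    _ = (k₀ ! : ℤ) := by rw [this]
  have h2 : ∏ k ∈ Ico (k₀ + 1) p, ((k : ℤ) - (k₀ : ℤ)) = ((p - 1 - k₀)! : ℤ) := by
    rw [Finset.prod_Ico_eq_prod_range]
    have : ∀ j ∈ range (p - (k₀ + 1)), ((k₀ + 1 + j : ℕ) : ℤ) - (k₀ : ℤ) = ((j : ℤ) + 1) := by
      intro j hj; push_cast; ring
    rw [Finset.prod_congr rfl this]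
    have he : p - (k₀ + 1) = p - 1 - k₀ := by omega
    rw [he]
    calc ∏ j ∈ range (p - 1 - k₀), ((j : ℤ) + 1)
        = ((∏ j ∈ range (p - 1 - k₀), (j + 1) : ℕ) : ℤ) := by push_cast; rfl
    _ = _ := by rw [Finset.prod_range_add_one_eq_factorial]
  rw [h1, h2]
end TP
namespace TP
open Finset Nat
variable {p : ℕ}

def Hs (p k : ℕ) : ZMod (p ^ 2) := ∑ j ∈ range k, (((j + 1 : ℕ) : ZMod (p ^ 2)))⁻¹

/-- Main arithmetic-progression product lemma. -/
lemma AP (hp : p.Prime) (h7 : 7 ≤ p) (a r k₀ : ℕ) (ha : ¬ p ∣ a) (hk₀ : k₀ < p)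
    (har : a * k₀ + r = r * p) :
    (∏ k ∈ (range p).erase k₀, ((a * k + r : ℕ) : ZMod (p ^ 2)))
      = (a : ZMod (p ^ 2)) ^ (p - 1) *
        ((-1) ^ k₀ * (k₀ ! : ZMod (p ^ 2)) * ((p - 1 - k₀)! : ZMod (p ^ 2))) := by
  haveI : Fact p.Prime := ⟨hp⟩
  haveI : NeZero p := ⟨hp.pos.ne'⟩
  set R := ZMod (p ^ 2) with hR
  set x : ℕ → R := fun k => (a : R) * ((k : R) - (k₀ : R)) with hx
  have hphix : ∀ k, phi p (x k) = (a : ZMod p) * ((k : ZMod p) - (k₀ : ZMod p)) := by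
    intro k
    simp only [hx, map_mul, map_sub, map_natCast]
  have hphine : ∀ k ∈ (range p).erase k₀, phi p (x k) ≠ 0 := by
    intro k hk
    rw [mem_erase, mem_range] at hk
    rw [hphix]
    apply mul_ne_zero
    · rw [Ne, ZMod.natCast_eq_zero_iff]; exact ha
    · rw [sub_ne_zero]
      intro hcontra
      apply hk.1
      have := congrArg ZMod.val hcontra
      rwa [ZMod.val_cast_of_lt hk.2, ZMod.val_cast_of_lt hk₀] at this
  have hunit : ∀ k ∈ (range p).erase k₀, IsUnit (x k) :=
    fun k hk => isUnit_of_phi hp (x k) (hphine k hk)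
  have hcast : (a : R) * (k₀ : R) + (r : R) = (r : R) * (p : R) := by
    have h := congrArg (Nat.cast : ℕ → R) har
    push_cast +zetaDelta at h
    linear_combination h
  have step1 : ∀ k ∈ (range p).erase k₀,
      ((a * k + r : ℕ) : R) = x k * (1 + (p : R) * ((x k)⁻¹ * (r : R))) := by
    intro k hk
    rw [← unit_split (x k) (r : R) (hunit k hk)]
    rw [Nat.cast_add, Nat.cast_mul]
    simp only [hx]
    linear_combination hcast
  rw [Finset.prod_congr rfl step1, Finset.prod_mul_distrib,
    prod_one_add (pp_zero hp.pos)]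
  have hsum : (p : R) * ∑ k ∈ (range p).erase k₀, ((x k)⁻¹ * (r : R)) = 0 := by
    apply p_mul_eq_zero hp.pos
    rw [map_sum]
    have hterm : ∀ k ∈ (range p).erase k₀,
        phi p ((x k)⁻¹ * (r : R))
          = (r : ZMod p) * ((a : ZMod p) * ((k : ZMod p) - (k₀ : ZMod p)))⁻¹ := by
      intro k hk
      rw [map_mul, phi_inv hp (x k) (hphine k hk), hphix, map_natCast, mul_comm]
    rw [Finset.sum_congr rfl hterm, ← Finset.mul_sum, sum_erase_inv hp h7 a k₀ hk₀, mul_zero]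
  rw [hsum, add_zero, mul_one]
  have hxsplit : ∀ k ∈ (range p).erase k₀,
      x k = (a : R) * ((((k : ℤ) - (k₀ : ℤ)) : ℤ) : R) := by
    intro k _; simp only [hx]; push_cast +zetaDelta; ring
  rw [Finset.prod_congr rfl hxsplit, Finset.prod_mul_distrib, Finset.prod_const,
    card_erase_of_mem (mem_range.mpr hk₀), card_range]
  congr 1
  have hrh : ∀ k ∈ (range p).erase k₀,
      ((((k : ℤ) - (k₀ : ℤ)) : ℤ) : R) = (Int.castRingHom R) ((k : ℤ) - (k₀ : ℤ)) :=
    fun _ _ => rfl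
  rw [Finset.prod_congr rfl hrh, ← map_prod (Int.castRingHom R) _ _, prod_erase_lin p k₀ hk₀]
  have hfin : (Int.castRingHom R) ((-1) ^ k₀ * (k₀ ! : ℤ) * ((p - 1 - k₀)! : ℤ))
      = ((((-1) ^ k₀ * (k₀ ! : ℤ) * ((p - 1 - k₀)! : ℤ) : ℤ)) : R) := rfl
  rw [hfin]
  push_cast +zetaDelta
  ring

lemma Gval (hp : p.Prime) (h7 : 7 ≤ p) (s : ℕ) :
    (∏ j ∈ range (p - 1), ((s * p + j + 1 : ℕ) : ZMod (p ^ 2)))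
      = (((p - 1)! : ℕ) : ZMod (p ^ 2)) := by
  haveI : Fact p.Prime := ⟨hp⟩
  haveI : NeZero p := ⟨hp.pos.ne'⟩
  set R := ZMod (p ^ 2) with hR
  set x : ℕ → R := fun j => ((j + 1 : ℕ) : R) with hx
  have hphine : ∀ j ∈ range (p - 1), phi p (x j) ≠ 0 := by
    intro j hj
    rw [mem_range] at hj
    simp only [hx, map_natCast]
    rw [Ne, ZMod.natCast_eq_zero_iff]
    intro hd
    have := Nat.le_of_dvd (by omega) hd
    omega
  have hunit : ∀ j ∈ range (p - 1), IsUnit (x j) :=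
    fun j hj => isUnit_of_phi hp (x j) (hphine j hj)
  have step1 : ∀ j ∈ range (p - 1),
      ((s * p + j + 1 : ℕ) : R) = x j * (1 + (p : R) * ((x j)⁻¹ * (s : R))) := by
    intro j hj
    rw [← unit_split (x j) (s : R) (hunit j hj)]
    simp only [hx]
    push_cast +zetaDelta
    ring
  rw [Finset.prod_congr rfl step1, Finset.prod_mul_distrib,
    prod_one_add (pp_zero hp.pos)]
  have hsum : (p : R) * ∑ j ∈ range (p - 1), ((x j)⁻¹ * (s : R)) = 0 := by
    apply p_mul_eq_zero hp.pos
    rw [map_sum]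
    have hterm : ∀ j ∈ range (p - 1),
        phi p ((x j)⁻¹ * (s : R)) = (((j + 1 : ℕ) : ZMod p))⁻¹ * (s : ZMod p) := by
      intro j hj
      rw [map_mul, phi_inv hp (x j) (hphine j hj), map_natCast]
      simp only [hx, map_natCast]
    rw [Finset.sum_congr rfl hterm, ← Finset.sum_mul, sum_inv_succ_range hp h7, zero_mul]
  rw [hsum, add_zero, mul_one]
  simp only [hx]
  rw [← Nat.cast_prod, Finset.prod_range_add_one_eq_factorial]

lemma FP (hp : p.Prime) (h7 : 7 ≤ p) (k : ℕ) (hk : k ≤ p - 1) :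
    (-1 : ZMod (p ^ 2)) ^ k * (k ! : ZMod (p ^ 2)) * (((p - 1 - k)! : ℕ) : ZMod (p ^ 2))
      = (((p - 1)! : ℕ) : ZMod (p ^ 2)) * (1 + (p : ZMod (p ^ 2)) * Hs p k) := by
  haveI : Fact p.Prime := ⟨hp⟩
  haveI : NeZero p := ⟨hp.pos.ne'⟩
  set R := ZMod (p ^ 2) with hR
  -- natural number identity
  have hnat : ∀ j : ℕ, j ≤ p - 1 → (p - 1)! = (p - 1 - j)! * ∏ i ∈ range j, (p - (i + 1)) := by
    intro j
    induction j with
    | zero => intro _; simp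
    | succ n ih =>
        intro hj
        rw [Finset.prod_range_succ, ← mul_assoc]
        have e1 : p - 1 - n = (p - 1 - (n + 1)) + 1 := by omega
        have e2 : p - (n + 1) = p - 1 - (n + 1) + 1 := by omega
        rw [ih (by omega), e1, Nat.factorial_succ, e2]
        ring
  have hcastid := congrArg (Nat.cast : ℕ → R) (hnat k hk)
  rw [Nat.cast_mul, Nat.cast_prod] at hcastid
  have hterm : ∀ i ∈ range k,
      ((p - (i + 1) : ℕ) : R)
        = (-(((i + 1 : ℕ)) : R)) * (1 + (p : R) * ((-(((i + 1 : ℕ)) : R))⁻¹ * 1)) := by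
    intro i hi
    rw [mem_range] at hi
    have hiu : IsUnit (((i + 1 : ℕ)) : R) := by
      apply isUnit_of_phi hp
      rw [phi_natCast, Ne, ZMod.natCast_eq_zero_iff]
      intro hd
      have := Nat.le_of_dvd (by omega) hd
      omega
    rw [← unit_split _ _ hiu.neg, mul_one]
    have hle : i + 1 ≤ p := by omega
    push_cast [Nat.cast_sub hle]
    ring
  rw [Finset.prod_congr rfl hterm, Finset.prod_mul_distrib,
    prod_one_add (pp_zero hp.pos)] at hcastid
  have hneg : ∀ i ∈ range k, (-(((i + 1 : ℕ)) : R)) = (-1) * (((i + 1 : ℕ)) : R) := by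
    intros; ring
  rw [Finset.prod_congr rfl hneg, Finset.prod_mul_distrib, Finset.prod_const, card_range,
    ← Nat.cast_prod, Finset.prod_range_add_one_eq_factorial] at hcastid
  have hsumneg : ∑ i ∈ range k, ((-(((i + 1 : ℕ)) : R))⁻¹ * 1) = - Hs p k := by
    rw [Hs, ← Finset.sum_neg_distrib]
    apply Finset.sum_congr rfl
    intro i hi
    rw [mem_range] at hi
    rw [mul_one, inv_neg_unit]
    apply isUnit_of_phi hp
    rw [phi_natCast, Ne, ZMod.natCast_eq_zero_iff]
    intro hd
    have hle := Nat.le_of_dvd (by omega) hd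
    omega
  rw [hsumneg] at hcastid
  -- hcastid : ((p-1)! : R) = (p-1-k)! * ((-1)^k * k! * (1 + p * (-Hs)))
  have hppz : (p : R) * Hs p k * ((p : R) * Hs p k) = 0 := by
    have := pp_zero (p := p) hp.pos
    calc (p : R) * Hs p k * ((p : R) * Hs p k)
        = (p : R) * (p : R) * (Hs p k * Hs p k) := by ring
    _ = 0 := by rw [this, zero_mul]
  calc (-1 : R) ^ k * (k ! : R) * (((p - 1 - k)! : ℕ) : R)
      = (((p - 1 - k)! : ℕ) : R) * ((-1) ^ k * (k ! : R) * (1 + (p : R) * (- Hs p k)))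
        * (1 + (p : R) * Hs p k) := by
        linear_combination ((-1 : R)^k * (k ! : R) * (((p - 1 - k)! : ℕ) : R)) * hppz
  _ = (((p - 1)! : ℕ) : R) * (1 + (p : R) * Hs p k) := by rw [← hcastid]

end TP
namespace TP
open Finset Nat
variable {p : ℕ}

lemma fact_add (x a : ℕ) : (x + a)! = x ! * ∏ r ∈ range a, (x + r + 1) := by
  induction a with
  | zero => simp
  | succ n ih =>
      rw [prod_range_succ, ← mul_assoc, ← ih]
      have h : x + (n + 1) = (x + n) + 1 := by omega
      rw [h, Nat.factorial_succ]
      ring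

lemma fact_block (a n : ℕ) : (a * n)! = ∏ k ∈ range n, ∏ r ∈ range a, (a * k + r + 1) := by
  induction n with
  | zero => simp
  | succ n ih =>
      rw [prod_range_succ, ← ih]
      have h : a * (n + 1) = a * n + a := by ring
      rw [h, fact_add]

lemma prod_range_pred {M : Type*} [CommMonoid M] (f : ℕ → M) {q : ℕ} (hq : 0 < q) :
    ∏ r ∈ range q, f r = (∏ r ∈ range (q - 1), f r) * f (q - 1) := by
  conv_lhs => rw [← Nat.succ_pred_eq_of_pos hq]
  rw [prod_range_succ]
  simp [Nat.pred_eq_sub_one]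

lemma fact_blocks_G (hp : 0 < p) (a : ℕ) :
    (a * p)! = p ^ a * a ! * ∏ s ∈ range a, ∏ j ∈ range (p - 1), (s * p + j + 1) := by
  induction a with
  | zero => simp
  | succ n ih =>
      have h1 : (n + 1) * p = n * p + p := by ring
      rw [h1, fact_add, ih, prod_range_succ]
      have h2 : ∏ r ∈ range p, (n * p + r + 1)
          = (∏ j ∈ range (p - 1), (n * p + j + 1)) * ((n + 1) * p) := by
        rw [prod_range_pred (fun r => n * p + r + 1) hp]
        congr 1
        omega
      rw [h2, Nat.factorial_succ]
      ring

lemma resid_split (a r k₀ : ℕ) (hk₀ : k₀ < p) (har : a * k₀ + r = r * p) :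
    ∏ k ∈ range p, (a * k + r) = r * p * ∏ k ∈ (range p).erase k₀, (a * k + r) := by
  rw [← Finset.mul_prod_erase (range p) _ (mem_range.mpr hk₀), har]

lemma resid_last (a : ℕ) : ∏ k ∈ range p, (a * k + a) = a ^ p * p ! := by
  have h : ∀ k ∈ range p, a * k + a = a * (k + 1) := by intros; ring
  rw [Finset.prod_congr rfl h, Finset.prod_mul_distrib, Finset.prod_const, card_range,
    Finset.prod_range_add_one_eq_factorial]

lemma fact_pred (hp : 0 < p) : p ! = p * (p - 1)! := by
  obtain ⟨n, rfl⟩ : ∃ n, p = n + 1 := ⟨p - 1, by omega⟩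
  simp [Nat.factorial_succ]

lemma E2nat (hp : p.Prime) (m : ℕ) (hm : p = 6 * m + 1) :
    (∏ k ∈ (range p).erase (3 * m), (2 * k + 1)) * 2 ^ p * (p - 1)!
      = 2 * ∏ s ∈ range 2, ∏ j ∈ range (p - 1), (s * p + j + 1) := by
  have key := fact_block 2 p
  have inner : ∀ k ∈ range p, ∏ r ∈ range 2, (2 * k + r + 1) = (2 * k + 1) * (2 * k + 2) := by
    intro k _
    rw [prod_range_succ, prod_range_one]
  rw [Finset.prod_congr rfl inner, Finset.prod_mul_distrib] at key
  have h1 : ∏ k ∈ range p, (2 * k + 1)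
      = 1 * p * ∏ k ∈ (range p).erase (3 * m), (2 * k + 1) :=
    resid_split 2 1 (3 * m) (by omega) (by omega)
  have h2 : ∏ k ∈ range p, (2 * k + 2) = 2 ^ p * p ! := resid_last 2
  rw [h1, h2, fact_blocks_G hp.pos 2, fact_pred hp.pos] at key
  have key2 : p ^ 2 * ((∏ k ∈ (range p).erase (3 * m), (2 * k + 1)) * 2 ^ p * (p - 1)!)
      = p ^ 2 * (2 * ∏ s ∈ range 2, ∏ j ∈ range (p - 1), (s * p + j + 1)) := by
    calc p ^ 2 * ((∏ k ∈ (range p).erase (3 * m), (2 * k + 1)) * 2 ^ p * (p - 1)!)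
        = (1 * p * ∏ k ∈ (range p).erase (3 * m), (2 * k + 1)) * (2 ^ p * (p * (p - 1)!)) := by
          ring
    _ = p ^ 2 * 2! * ∏ s ∈ range 2, ∏ j ∈ range (p - 1), (s * p + j + 1) := key.symm
    _ = p ^ 2 * (2 * ∏ s ∈ range 2, ∏ j ∈ range (p - 1), (s * p + j + 1)) := by
          norm_num [Nat.factorial]; ring
  exact Nat.eq_of_mul_eq_mul_left (pow_pos hp.pos 2) key2

lemma E6nat (hp : p.Prime) (m : ℕ) (hm : p = 6 * m + 1) :
    (∏ k ∈ (range p).erase m, (6 * k + 1)) * (∏ k ∈ (range p).erase (2 * m), (6 * k + 2))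
      * (∏ k ∈ (range p).erase (3 * m), (6 * k + 3))
      * (∏ k ∈ (range p).erase (4 * m), (6 * k + 4))
      * (∏ k ∈ (range p).erase (5 * m), (6 * k + 5)) * 6 ^ p * (p - 1)!
      = 6 * ∏ s ∈ range 6, ∏ j ∈ range (p - 1), (s * p + j + 1) := by
  have key := fact_block 6 p
  have inner : ∀ k ∈ range p, ∏ r ∈ range 6, (6 * k + r + 1)
      = (6 * k + 1) * ((6 * k + 2) * ((6 * k + 3) * ((6 * k + 4) * ((6 * k + 5) * (6 * k + 6))))) := by
    intro k _
    simp only [prod_range_succ, prod_range_zero, one_mul]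
    ring
  rw [Finset.prod_congr rfl inner] at key
  simp only [Finset.prod_mul_distrib] at key
  rw [resid_split 6 1 m (by omega) (by omega),
    resid_split 6 2 (2 * m) (by omega) (by omega),
    resid_split 6 3 (3 * m) (by omega) (by omega),
    resid_split 6 4 (4 * m) (by omega) (by omega),
    resid_split 6 5 (5 * m) (by omega) (by omega),
    resid_last 6, fact_blocks_G hp.pos 6, fact_pred hp.pos] at key
  have key2 : (p ^ 6 * 120) * ((∏ k ∈ (range p).erase m, (6 * k + 1))
      * (∏ k ∈ (range p).erase (2 * m), (6 * k + 2))
      * (∏ k ∈ (range p).erase (3 * m), (6 * k + 3))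
      * (∏ k ∈ (range p).erase (4 * m), (6 * k + 4))
      * (∏ k ∈ (range p).erase (5 * m), (6 * k + 5)) * 6 ^ p * (p - 1)!)
      = (p ^ 6 * 120) * (6 * ∏ s ∈ range 6, ∏ j ∈ range (p - 1), (s * p + j + 1)) := by
    calc (p ^ 6 * 120) * ((∏ k ∈ (range p).erase m, (6 * k + 1))
        * (∏ k ∈ (range p).erase (2 * m), (6 * k + 2))
        * (∏ k ∈ (range p).erase (3 * m), (6 * k + 3))
        * (∏ k ∈ (range p).erase (4 * m), (6 * k + 4))
        * (∏ k ∈ (range p).erase (5 * m), (6 * k + 5)) * 6 ^ p * (p - 1)!)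
        = (1 * p * ∏ k ∈ (range p).erase m, (6 * k + 1)) *
            ((2 * p * ∏ k ∈ (range p).erase (2 * m), (6 * k + 2)) *
              ((3 * p * ∏ k ∈ (range p).erase (3 * m), (6 * k + 3)) *
                ((4 * p * ∏ k ∈ (range p).erase (4 * m), (6 * k + 4)) *
                  ((5 * p * ∏ k ∈ (range p).erase (5 * m), (6 * k + 5)) *
                    (6 ^ p * (p * (p - 1)!)))))) := by ring
    _ = p ^ 6 * 6! * ∏ s ∈ range 6, ∏ j ∈ range (p - 1), (s * p + j + 1) := key.symm
    _ = (p ^ 6 * 120) * (6 * ∏ s ∈ range 6, ∏ j ∈ range (p - 1), (s * p + j + 1)) := by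
          norm_num [Nat.factorial]; ring
  exact Nat.eq_of_mul_eq_mul_left (Nat.mul_pos (pow_pos hp.pos 6) (by norm_num)) key2

end TP
namespace TP
open Finset Nat
variable {p : ℕ}

lemma isUnit_F (hp : p.Prime) : IsUnit ((((p - 1)! : ℕ)) : ZMod (p ^ 2)) := by
  apply isUnit_of_phi hp
  rw [phi_natCast, Ne, ZMod.natCast_eq_zero_iff]
  intro hd
  have h1 := (Nat.Prime.dvd_factorial hp).mp hd
  have h2 := hp.two_le
  omega

lemma isUnit_lit (hp : p.Prime) (n : ℕ) (hn0 : 0 < n) (hnp : n < p) :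
    IsUnit ((n : ℕ) : ZMod (p ^ 2)) := by
  apply isUnit_of_phi hp
  rw [phi_natCast, Ne, ZMod.natCast_eq_zero_iff]
  intro hd
  have := Nat.le_of_dvd hn0 hd
  omega

lemma K2R (hp : p.Prime) (h7 : 7 ≤ p) (m : ℕ) (hm : p = 6 * m + 1) :
    (4 : ZMod (p ^ 2)) ^ (p - 1) * (1 + (p : ZMod (p ^ 2)) * Hs p (3 * m)) = 1 := by
  haveI : Fact p.Prime := ⟨hp⟩
  set R := ZMod (p ^ 2) with hR
  set F : R := (((p - 1)! : ℕ) : R) with hF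
  -- AP instance
  have ap3 := AP hp h7 2 1 (3 * m) (by intro hd; have := Nat.le_of_dvd (by norm_num) hd; omega)
    (by omega) (by omega)
  rw [show p - 1 - 3 * m = 3 * m by omega] at ap3
  have fp3 := FP hp h7 (3 * m) (by omega)
  rw [show p - 1 - 3 * m = 3 * m by omega] at fp3
  -- G values
  have g0 := Gval hp h7 0
  simp only [Nat.zero_mul, Nat.zero_add] at g0
  have g1 := Gval hp h7 1
  simp only [Nat.one_mul] at g1
  -- cast of nat identity
  have e2 := E2nat hp m hm
  rw [prod_range_succ, prod_range_one] at e2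
  simp only [Nat.zero_mul, Nat.zero_add, Nat.one_mul] at e2
  have ce2 := congrArg (Nat.cast : ℕ → R) e2
  push_cast at ce2 ap3 fp3 g0 g1
  push_cast +zetaDelta at ce2
  -- power facts
  have hpow2 : (2 : R) ^ p = 2 ^ (p - 1) * 2 := by
    rw [← pow_succ]; congr 1; omega
  have h4 : (4 : R) ^ (p - 1) = 2 ^ (p - 1) * 2 ^ (p - 1) := by
    rw [← mul_pow]; norm_num
  have hFu : IsUnit F := isUnit_F hp
  have h2u : IsUnit (2 : R) := by
    have := isUnit_lit hp 2 (by norm_num) (by omega)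
    simpa using this
  have key : (2 * F * F) * ((4 : R) ^ (p - 1) * (1 + (p : R) * Hs p (3 * m)))
      = (2 * F * F) * 1 := by
    calc (2 * F * F) * ((4 : R) ^ (p - 1) * (1 + (p : R) * Hs p (3 * m)))
        = 2 * F * (2 ^ (p - 1) * 2 ^ (p - 1)) * (F * (1 + (p : R) * Hs p (3 * m))) := by
          rw [h4]; ring
    _ = 2 * F * (2 ^ (p - 1) * 2 ^ (p - 1))
          * ((-1) ^ (3 * m) * (((3 * m)! : ℕ) : R) * (((3 * m)! : ℕ) : R)) := by
          rw [← fp3]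
    _ = F * (∏ k ∈ (range p).erase (3 * m), (2 * (k : R) + 1)) * (2 ^ (p - 1) * 2) := by
          rw [ap3]; ring
    _ = (∏ k ∈ (range p).erase (3 * m), (2 * (k : R) + 1)) * 2 ^ p * F := by
          rw [hpow2]; ring
    _ = 2 * ((∏ j ∈ range (p - 1), ((j : R) + 1)) * ∏ j ∈ range (p - 1), ((p : R) + (j : R) + 1)) := by
          linear_combination ce2
    _ = (2 * F * F) * 1 := by rw [g0, g1]; ring
  exact ((h2u.mul hFu).mul hFu).mul_left_cancel key

end TP
namespace TP
open Finset Nat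
variable {p : ℕ}

lemma K6R (hp : p.Prime) (h7 : 7 ≤ p) (m : ℕ) (hm : p = 6 * m + 1) :
    (6 : ZMod (p ^ 2)) ^ (6 * (p - 1))
      * ((1 + (p : ZMod (p ^ 2)) * Hs p m) ^ 2
        * ((1 + (p : ZMod (p ^ 2)) * Hs p (2 * m)) ^ 2
          * (1 + (p : ZMod (p ^ 2)) * Hs p (3 * m)))) = 1 := by
  haveI : Fact p.Prime := ⟨hp⟩
  set R := ZMod (p ^ 2) with hR
  set F : R := (((p - 1)! : ℕ) : R) with hF
  have hnd6 : ¬ p ∣ 6 := by intro hd; have := Nat.le_of_dvd (by norm_num) hd; omega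
  -- AP instances
  have ap1 := AP hp h7 6 1 m hnd6 (by omega) (by omega)
  have ap2 := AP hp h7 6 2 (2 * m) hnd6 (by omega) (by omega)
  have ap3 := AP hp h7 6 3 (3 * m) hnd6 (by omega) (by omega)
  have ap4 := AP hp h7 6 4 (4 * m) hnd6 (by omega) (by omega)
  have ap5 := AP hp h7 6 5 (5 * m) hnd6 (by omega) (by omega)
  rw [show p - 1 - m = 5 * m by omega] at ap1
  rw [show p - 1 - 2 * m = 4 * m by omega] at ap2
  rw [show p - 1 - 3 * m = 3 * m by omega] at ap3
  rw [show p - 1 - 4 * m = 2 * m by omega] at ap4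
  rw [show p - 1 - 5 * m = m by omega] at ap5
  -- sign facts
  have hs2 : (-1 : R) ^ (2 * m) = 1 := by rw [pow_mul]; norm_num
  have hs3 : (-1 : R) ^ (3 * m) = (-1) ^ m := by rw [pow_mul]; norm_num
  have hs4 : (-1 : R) ^ (4 * m) = 1 := by rw [pow_mul]; norm_num
  have hs5 : (-1 : R) ^ (5 * m) = (-1) ^ m := by rw [pow_mul]; norm_num
  rw [hs2] at ap2
  rw [hs3] at ap3
  rw [hs4] at ap4
  rw [hs5] at ap5
  -- FP instances
  have fp1 := FP hp h7 m (by omega)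
  have fp2 := FP hp h7 (2 * m) (by omega)
  have fp3 := FP hp h7 (3 * m) (by omega)
  rw [show p - 1 - m = 5 * m by omega] at fp1
  rw [show p - 1 - 2 * m = 4 * m by omega, hs2] at fp2
  rw [show p - 1 - 3 * m = 3 * m by omega, hs3] at fp3
  -- G values
  have g0 := Gval hp h7 0
  simp only [Nat.zero_mul, Nat.zero_add] at g0
  have g1 := Gval hp h7 1
  simp only [Nat.one_mul] at g1
  have g2 := Gval hp h7 2
  have g3 := Gval hp h7 3
  have g4 := Gval hp h7 4
  have g5 := Gval hp h7 5
  -- cast of nat identity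
  have e6 := E6nat hp m hm
  simp only [prod_range_succ, prod_range_zero, Nat.one_mul, Nat.zero_mul, Nat.zero_add] at e6
  have ce6 := congrArg (Nat.cast : ℕ → R) e6
  push_cast at ce6 ap1 ap2 ap3 ap4 ap5 fp1 fp2 fp3 g0 g1 g2 g3 g4 g5
  push_cast +zetaDelta at ce6
  -- power fact
  have hpow6 : (6 : R) ^ (6 * (p - 1)) * 6 = ((6 : R) ^ (p - 1)) ^ 5 * 6 ^ p := by
    rw [← pow_succ, ← pow_mul, ← pow_add]; congr 1; omega
  have hFu : IsUnit F := isUnit_F hp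
  have h6u : IsUnit (6 : R) := by
    have := isUnit_lit hp 6 (by norm_num) (by omega)
    simpa using this
  set u1 : R := 1 + (p : R) * Hs p m with hu1
  set u2 : R := 1 + (p : R) * Hs p (2 * m) with hu2
  set u3 : R := 1 + (p : R) * Hs p (3 * m) with hu3
  have key : (6 * F ^ 6) * ((6 : R) ^ (6 * (p - 1)) * (u1 ^ 2 * (u2 ^ 2 * u3)))
      = (6 * F ^ 6) * 1 := by
    calc (6 * F ^ 6) * ((6 : R) ^ (6 * (p - 1)) * (u1 ^ 2 * (u2 ^ 2 * u3)))
        = ((6 : R) ^ (p - 1)) ^ 5 * 6 ^ p * (F * ((F * u1) ^ 2 * ((F * u2) ^ 2 * (F * u3)))) := by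
          linear_combination (F ^ 6 * (u1 ^ 2 * (u2 ^ 2 * u3))) * hpow6
    _ = ((6 : R) ^ (p - 1)) ^ 5 * 6 ^ p
          * (F * (((-1) ^ m * ((m ! : ℕ) : R) * (((5 * m)! : ℕ) : R)) ^ 2
            * ((1 * (((2 * m)! : ℕ) : R) * (((4 * m)! : ℕ) : R)) ^ 2
              * ((-1) ^ m * (((3 * m)! : ℕ) : R) * (((3 * m)! : ℕ) : R))))) := by
          rw [← fp1, ← fp2, ← fp3]
    _ = (∏ k ∈ (range p).erase m, (6 * (k : R) + 1))
          * (∏ k ∈ (range p).erase (2 * m), (6 * (k : R) + 2))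
          * (∏ k ∈ (range p).erase (3 * m), (6 * (k : R) + 3))
          * (∏ k ∈ (range p).erase (4 * m), (6 * (k : R) + 4))
          * (∏ k ∈ (range p).erase (5 * m), (6 * (k : R) + 5)) * 6 ^ p * F := by
          rw [ap1, ap2, ap3, ap4, ap5]; ring
    _ = 6 * ((∏ j ∈ range (p - 1), ((j : R) + 1))
          * ((∏ j ∈ range (p - 1), ((p : R) + (j : R) + 1))
          * ((∏ j ∈ range (p - 1), (2 * (p : R) + (j : R) + 1))
          * ((∏ j ∈ range (p - 1), (3 * (p : R) + (j : R) + 1))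
          * ((∏ j ∈ range (p - 1), (4 * (p : R) + (j : R) + 1))
          * (∏ j ∈ range (p - 1), (5 * (p : R) + (j : R) + 1))))))) := by
          linear_combination ce6
    _ = (6 * F ^ 6) * 1 := by rw [g0, g1, g2, g3, g4, g5]; ring
  exact (h6u.mul (hFu.pow 6)).mul_left_cancel key

end TP
namespace TP
open Finset Nat
variable {p : ℕ}

lemma main_zmod (hp : p.Prime) (h7 : 7 ≤ p) (m : ℕ) (hm : p = 6 * m + 1) :
    ((6 ^ (p - 1) * ((∏ k ∈ (range p).erase m, (6 * k + 1))
      * ∏ k ∈ (range p).erase (2 * m), (3 * k + 1)) : ℕ) : ZMod (p ^ 2))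
      = (((p - 1)! * (p - 1)! : ℕ) : ZMod (p ^ 2)) := by
  haveI : Fact p.Prime := ⟨hp⟩
  set R := ZMod (p ^ 2) with hR
  set F : R := (((p - 1)! : ℕ) : R) with hF
  have hnd6 : ¬ p ∣ 6 := by intro hd; have := Nat.le_of_dvd (by norm_num) hd; omega
  have hnd3 : ¬ p ∣ 3 := by intro hd; have := Nat.le_of_dvd (by norm_num) hd; omega
  have ap6 := AP hp h7 6 1 m hnd6 (by omega) (by omega)
  have apB := AP hp h7 3 1 (2 * m) hnd3 (by omega) (by omega)
  rw [show p - 1 - m = 5 * m by omega] at ap6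
  rw [show p - 1 - 2 * m = 4 * m by omega] at apB
  have hs2 : (-1 : R) ^ (2 * m) = 1 := by rw [pow_mul]; norm_num
  rw [hs2] at apB
  have fp1 := FP hp h7 m (by omega)
  have fp2 := FP hp h7 (2 * m) (by omega)
  rw [show p - 1 - m = 5 * m by omega] at fp1
  rw [show p - 1 - 2 * m = 4 * m by omega, hs2] at fp2
  push_cast at ap6 apB fp1 fp2
  set u1 : R := 1 + (p : R) * Hs p m with hu1
  set u2 : R := 1 + (p : R) * Hs p (2 * m) with hu2
  set u3 : R := 1 + (p : R) * Hs p (3 * m) with hu3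
  have K2 := K2R hp h7 m hm
  have K6 := K6R hp h7 m hm
  have hFu : IsUnit F := isUnit_F hp
  have h2u : IsUnit (2 : R) := by
    have := isUnit_lit hp 2 (by norm_num) (by omega); simpa using this
  have h6u : IsUnit (6 : R) := by
    have := isUnit_lit hp 6 (by norm_num) (by omega); simpa using this
  -- Fermat: 108^(p-1) = 1 + p * q
  have hferm : ∃ q : R, (108 : R) ^ (p - 1) = 1 + (p : R) * q := by
    have hne : ((108 : ℕ) : ZMod p) ≠ 0 := by
      rw [Ne, ZMod.natCast_eq_zero_iff]
      intro hd
      have h108 : (108 : ℕ) = 4 * 27 := by norm_num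
      rw [h108] at hd
      rcases (Nat.Prime.dvd_mul hp).mp hd with h | h
      · have := Nat.le_of_dvd (by norm_num) h; omega
      · have h27 : (27 : ℕ) = 3 ^ 3 := by norm_num
        rw [h27] at h
        have := Nat.Prime.dvd_of_dvd_pow hp h
        have := Nat.le_of_dvd (by norm_num) this; omega
    have hphi : phi p ((108 : R) ^ (p - 1) - 1) = 0 := by
      rw [map_sub, map_pow, map_one]
      have h108 : (108 : R) = ((108 : ℕ) : R) := by norm_num
      rw [h108, phi_natCast, ZMod.pow_card_sub_one_eq_one hne, sub_self]
    obtain ⟨q, hq⟩ := exists_eq_p_mul hp.pos _ hphi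
    exact ⟨q, by linear_combination hq⟩
  obtain ⟨q, hq⟩ := hferm
  -- x = 108^(p-1) * u1 * u2 satisfies x^2 = 1 and x = 1 + p*c hence x = 1
  have hppz := pp_zero (p := p) hp.pos
  set c : R := q + Hs p m + Hs p (2 * m)
    + (p : R) * (q * Hs p m + q * Hs p (2 * m) + Hs p m * Hs p (2 * m))
    + (p : R) * (p : R) * (q * Hs p m * Hs p (2 * m)) with hc
  have hxc : (108 : R) ^ (p - 1) * u1 * u2 = 1 + (p : R) * c := by
    rw [hq, hu1, hu2, hc]; ring
  have hpow108 : (108 : R) ^ (p - 1) * ((108 : R) ^ (p - 1) * (4 : R) ^ (p - 1))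
      = (6 : R) ^ (6 * (p - 1)) := by
    have h1 : ((108 : R) * (108 * 4)) = 6 ^ 6 := by norm_num
    rw [← mul_pow, ← mul_pow, h1, ← pow_mul]
  have hxx : ((108 : R) ^ (p - 1) * u1 * u2) * ((108 : R) ^ (p - 1) * u1 * u2) = 1 := by
    have h66u : IsUnit ((6 : R) ^ (6 * (p - 1))) := h6u.pow _
    apply h66u.mul_left_cancel
    calc (6 : R) ^ (6 * (p - 1))
          * (((108 : R) ^ (p - 1) * u1 * u2) * ((108 : R) ^ (p - 1) * u1 * u2))
        = (6 : R) ^ (6 * (p - 1))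
          * (((108 : R) ^ (p - 1) * u1 * u2) * ((108 : R) ^ (p - 1) * u1 * u2))
          * ((4 : R) ^ (p - 1) * u3) := by rw [K2, mul_one]
      _ = ((108 : R) ^ (p - 1) * ((108 : R) ^ (p - 1) * (4 : R) ^ (p - 1)))
          * ((6 : R) ^ (6 * (p - 1)) * (u1 ^ 2 * (u2 ^ 2 * u3))) := by ring
      _ = ((108 : R) ^ (p - 1) * ((108 : R) ^ (p - 1) * (4 : R) ^ (p - 1))) * 1 := by rw [K6]
      _ = (6 : R) ^ (6 * (p - 1)) * 1 := by rw [hpow108]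
  have hpc : (p : R) * c = 0 := by
    have h2pc : (2 : R) * ((p : R) * c) = (2 : R) * 0 := by
      rw [hxc] at hxx
      rw [mul_zero]
      linear_combination hxx - (c * c) * hppz
    exact h2u.mul_left_cancel h2pc
  have hx1 : (108 : R) ^ (p - 1) * u1 * u2 = 1 := by rw [hxc, hpc, add_zero]
  -- final assembly
  push_cast
  have hpow108b : (6 : R) ^ (p - 1) * ((6 : R) ^ (p - 1) * (3 : R) ^ (p - 1))
      = (108 : R) ^ (p - 1) := by
    rw [← mul_pow, ← mul_pow]; norm_num
  calc (6 : R) ^ (p - 1) * ((∏ k ∈ (range p).erase m, (6 * (k : R) + 1))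
        * ∏ k ∈ (range p).erase (2 * m), (3 * (k : R) + 1))
      = (6 : R) ^ (p - 1) * ((6 : R) ^ (p - 1)
          * ((-1) ^ m * ((m ! : ℕ) : R) * (((5 * m)! : ℕ) : R))
        * ((3 : R) ^ (p - 1) * (1 * (((2 * m)! : ℕ) : R) * (((4 * m)! : ℕ) : R)))) := by
        rw [ap6, apB]
    _ = (6 : R) ^ (p - 1) * ((6 : R) ^ (p - 1) * (3 : R) ^ (p - 1)) * ((F * u1) * (F * u2)) := by
        rw [← fp1, ← fp2]; ring
    _ = F * F * ((108 : R) ^ (p - 1) * u1 * u2) := by rw [hpow108b]; ring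
    _ = F * F := by rw [hx1, mul_one]
end TP
namespace TP
open Finset Nat
variable {p : ℕ}

lemma dvd_main (hp : p.Prime) (h6 : p % 6 = 1) :
    ((p : ℤ)) ^ 4 ∣ 6 ^ (p - 1) * ((∏ k ∈ range p, (6 * k + 1) : ℕ) : ℤ)
      * ((∏ k ∈ range p, (3 * k + 1) : ℕ) : ℤ) - ((p ! : ℤ)) ^ 2 := by
  have h7 := seven_le hp h6
  set m := p / 6 with hm'
  have hm : p = 6 * m + 1 := by omega
  set X : ℕ := 6 ^ (p - 1) * ((∏ k ∈ (range p).erase m, (6 * k + 1))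
      * ∏ k ∈ (range p).erase (2 * m), (3 * k + 1)) with hX
  set Y : ℕ := (p - 1)! * (p - 1)! with hY
  have hmz := main_zmod hp h7 m hm
  have hmod : X ≡ Y [MOD p ^ 2] := (ZMod.natCast_eq_natCast_iff _ _ _).mp hmz
  have hdvd2 : ((p : ℤ)) ^ 2 ∣ (X : ℤ) - (Y : ℤ) := by
    have hd := hmod.dvd
    push_cast at hd
    exact dvd_sub_comm.mp hd
  have hA : (∏ k ∈ range p, (6 * k + 1)) = p * ∏ k ∈ (range p).erase m, (6 * k + 1) := by
    have := resid_split (p := p) 6 1 m (by omega) (by omega)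
    simpa using this
  have hB : (∏ k ∈ range p, (3 * k + 1)) = p * ∏ k ∈ (range p).erase (2 * m), (3 * k + 1) := by
    have := resid_split (p := p) 3 1 (2 * m) (by omega) (by omega)
    simpa using this
  have hfac := fact_pred hp.pos
  have hkey : 6 ^ (p - 1) * ((∏ k ∈ range p, (6 * k + 1) : ℕ) : ℤ)
      * ((∏ k ∈ range p, (3 * k + 1) : ℕ) : ℤ) - ((p ! : ℤ)) ^ 2
      = (p : ℤ) ^ 2 * ((X : ℤ) - (Y : ℤ)) := by
    rw [hA, hB, hfac, hX, hY]
    push_cast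
    ring
  rw [hkey, show (4 : ℕ) = 2 + 2 from rfl, pow_add]
  exact mul_dvd_mul_left _ hdvd2
end TP
namespace TP
open Finset Nat
variable {p : ℕ}

lemma asc_eval (x : ℚ) (n : ℕ) :
    (ascPochhammer ℚ n).eval x = ∏ k ∈ range n, (x + k) := by
  induction n with
  | zero => simp
  | succ n ih =>
      rw [ascPochhammer_succ_right, prod_range_succ, ← ih]
      simp [Polynomial.eval_mul]

lemma asc_div (hp : 0 < p) (a : ℕ) (ha : 0 < a) :
    (ascPochhammer ℚ p).eval (1 / (a : ℚ)) = ((∏ k ∈ range p, (a * k + 1) : ℕ) : ℚ) / a ^ p := by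
  rw [asc_eval]
  have hterm : ∀ k ∈ range p, (1 / (a : ℚ) + k) = ((a * k + 1 : ℕ) : ℚ) / a := by
    intro k _
    have haq : (a : ℚ) ≠ 0 := by positivity
    push_cast
    field_simp
    ring
  rw [Finset.prod_congr rfl hterm, Finset.prod_div_distrib, Finset.prod_const, card_range,
    ← Nat.cast_prod]
end TP
open Finset Nat in
/-- Let `t_n = 108^n (1/6)_n (1/3)_n/(n!)^2`. For every prime `p ≡ 1 (mod 6)`,
`t_p ≡ t_1 (mod p^2)`, i.e. `t_p ≡ 6 (mod p^2)`. -/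
theorem t_p_cong (p : ℕ) (hp : p.Prime) (h6 : p % 6 = 1)
    (t : ℕ → ℚ)
    (ht : ∀ m, t m = (108 : ℚ) ^ m * (ascPochhammer ℚ m).eval (1/6)
      * (ascPochhammer ℚ m).eval (1/3) / (m.factorial : ℚ) ^ 2) :
    padicNorm p (t p - t 1) ≤ (p : ℚ) ^ (-(2 : ℤ)) ∧
      padicNorm p (t p - 6) ≤ (p : ℚ) ^ (-(2 : ℤ)) := by
  haveI : Fact p.Prime := ⟨hp⟩
  have h7 := TP.seven_le hp h6
  have ht1 : t 1 = 6 := by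
    rw [ht 1]
    simp [ascPochhammer_one, Nat.factorial]
    norm_num
  set A := ∏ k ∈ Finset.range p, (6 * k + 1) with hA
  set B := ∏ k ∈ Finset.range p, (3 * k + 1) with hB
  set D : ℤ := 6 ^ (p - 1) * (A : ℤ) * (B : ℤ) - ((p ! : ℤ)) ^ 2 with hD
  have hDdvd : ((p : ℤ)) ^ 4 ∣ D := TP.dvd_main hp h6
  have hfacq : ((p ! : ℚ)) ≠ 0 := by
    exact_mod_cast Nat.cast_ne_zero.mpr (Nat.factorial_ne_zero p)
  have hpowq : (108 : ℚ) ^ p = 6 * 6 ^ (p - 1) * (6 ^ p * 3 ^ p) := by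
    have h1 : (108 : ℚ) ^ p = 6 ^ p * (6 ^ p * 3 ^ p) := by
      rw [← mul_pow, ← mul_pow]; norm_num
    have h2 : (6 : ℚ) ^ p = 6 * 6 ^ (p - 1) := by
      conv_lhs => rw [show p = 1 + (p - 1) by omega]
      rw [pow_add, pow_one]
    rw [h1]
    nth_rewrite 1 [h2]
    ring
  have hnum : (108 : ℚ) ^ p * ((A : ℚ) / 6 ^ p) * ((B : ℚ) / 3 ^ p)
      = 6 * 6 ^ (p - 1) * (A : ℚ) * (B : ℚ) := by
    have h6q : ((6 : ℚ)) ^ p ≠ 0 := by norm_num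
    have h3q : ((3 : ℚ)) ^ p ≠ 0 := by norm_num
    field_simp
    linear_combination ((A : ℚ) * (B : ℚ)) * hpowq
  have goalform : (6 * 6 ^ (p - 1) * (A : ℚ) * (B : ℚ)) / ((p ! : ℚ)) ^ 2 - 6
      = ((6 * D : ℤ) : ℚ) / (((p ! : ℚ)) * ((p ! : ℚ))) := by
    push_cast [hD]
    field_simp
  have htp6 : t p - 6 = ((6 * D : ℤ) : ℚ) / (((p ! : ℚ)) * ((p ! : ℚ))) := by
    rw [ht p, show (1/6 : ℚ) = 1 / ((6 : ℕ) : ℚ) by norm_num,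
      show (1/3 : ℚ) = 1 / ((3 : ℕ) : ℚ) by norm_num,
      TP.asc_div hp.pos 6 (by norm_num), TP.asc_div hp.pos 3 (by norm_num)]
    rw [← hA, ← hB, show (((6 : ℕ) : ℚ)) = (6 : ℚ) by norm_num,
      show (((3 : ℕ) : ℚ)) = (3 : ℚ) by norm_num, hnum, goalform]
  have hq0 : (0 : ℚ) < p := by
    have := hp.pos; positivity
  have hdvd64 : ((p ^ 4 : ℕ) : ℤ) ∣ 6 * D := by
    push_cast
    exact Dvd.dvd.mul_left hDdvd 6
  have hnum_le : padicNorm p ((6 * D : ℤ) : ℚ) ≤ (p : ℚ) ^ (-(4 : ℤ)) := by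
    have := (padicNorm.dvd_iff_norm_le (p := p) (n := 4) (z := 6 * D)).mp hdvd64
    simpa using this
  have hfac1 : padicNorm p ((p ! : ℚ)) = (p : ℚ) ^ (-(1 : ℤ)) := by
    have hsplit : ((p ! : ℕ) : ℚ) = (p : ℚ) * (((p - 1)! : ℕ) : ℚ) := by
      have := congrArg (Nat.cast : ℕ → ℚ) (TP.fact_pred hp.pos)
      push_cast at this
      exact_mod_cast this
    have hfd : ¬ p ∣ (p - 1)! := by
      intro hd
      have h1 := (Nat.Prime.dvd_factorial hp).mp hd
      omega
    have h1 : padicNorm p (((p - 1)! : ℕ) : ℚ) = 1 := (padicNorm.nat_eq_one_iff _).mpr hfd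
    rw [show ((p ! : ℚ)) = (((p !) : ℕ) : ℚ) from rfl, hsplit, padicNorm.mul,
      padicNorm.padicNorm_p hp.one_lt, h1, mul_one, ← zpow_neg_one]
  have hden : padicNorm p ((p ! : ℚ) * (p ! : ℚ)) = (p : ℚ) ^ (-(2 : ℤ)) := by
    rw [padicNorm.mul, hfac1, ← zpow_add₀ (ne_of_gt hq0)]
    norm_num
  have hmain : padicNorm p (t p - 6) ≤ (p : ℚ) ^ (-(2 : ℤ)) := by
    rw [htp6, padicNorm.div, hden, div_eq_mul_inv, ← zpow_neg]
    calc padicNorm p ((6 * D : ℤ) : ℚ) * (p : ℚ) ^ (-(-(2 : ℤ)))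
        ≤ (p : ℚ) ^ (-(4 : ℤ)) * (p : ℚ) ^ (-(-(2 : ℤ))) :=
          mul_le_mul_of_nonneg_right hnum_le (zpow_nonneg (le_of_lt hq0) _)
    _ = (p : ℚ) ^ (-(2 : ℤ)) := by
          rw [← zpow_add₀ (ne_of_gt hq0)]
          norm_num
  exact ⟨by rw [ht1]; exact hmain, hmain⟩
end
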